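/- arXiv:math/0609140 — 5 statements merged into one kernel-verified Lean document; each statement's English description precedes it below -/
import Mathlib

section
/- Let l_1 ≤ ... ≤ l_n be positive reals, and suppose the two-element set {n-2, n-1} is long and the singleton {n} is short. Then the length vector is generic, i.e. for no choice of signs ε_i ∈ {±1} does ∑ ε_i l_i = 0. -/
/-- If `{n-2, n-1}` is long and `{n}` is short for a sorted positive length
vector, then the length vector is generic: no signed sum vanishes. -/
theorem generic_of_long_pair_short_singleton (n : ℕ) (hn : 3 ≤ n) (l : ℕ → ℝ)
    (hl : ∀ i, 0 < l i) (hmono : Monotone l)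
    (hlong : ∑ i ∈ Finset.Icc 1 n \ ({n - 2, n - 1} : Finset ℕ), l i <
      ∑ i ∈ ({n - 2, n - 1} : Finset ℕ), l i)
    (hshort : ∑ i ∈ ({n} : Finset ℕ), l i < ∑ i ∈ Finset.Icc 1 n \ {n}, l i) :
    ∀ ε : ℕ → ℝ, (∀ i ∈ Finset.Icc 1 n, ε i = 1 ∨ ε i = -1) →
      ∑ i ∈ Finset.Icc 1 n, ε i * l i ≠ 0 := by
  intro ε hε hsum
  set I := Finset.Icc 1 n with hI
  have hn2 : n - 2 ∈ I := by simp [hI, Finset.mem_Icc]; omega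
  have hn1 : n - 1 ∈ I := by simp [hI, Finset.mem_Icc]; omega
  have hnn : n ∈ I := by simp [hI, Finset.mem_Icc]; omega
  have hP : ({n - 2, n - 1} : Finset ℕ) ⊆ I := by
    intro x hx
    simp only [Finset.mem_insert, Finset.mem_singleton] at hx
    rcases hx with rfl | rfl <;> assumption
  have hsub : ∑ i ∈ I \ ({n - 2, n - 1} : Finset ℕ), l i
      = ∑ i ∈ I, l i - ∑ i ∈ ({n - 2, n - 1} : Finset ℕ), l i :=
    Finset.sum_sdiff_eq_sub hP
  have hpair : ∑ i ∈ ({n - 2, n - 1} : Finset ℕ), l i = l (n - 2) + l (n - 1) := by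
    rw [Finset.sum_insert (by simp; omega), Finset.sum_singleton]
  have hS : ∑ i ∈ I, l i < 2 * (l (n - 2) + l (n - 1)) := by
    rw [hsub, hpair] at hlong; linarith
  set J := I.filter (fun i => ε i = -1) with hJ
  set K := I.filter (fun i => ¬ ε i = -1) with hK
  have hsplit : ∑ i ∈ J, l i + ∑ i ∈ K, l i = ∑ i ∈ I, l i :=
    Finset.sum_filter_add_sum_filter_not I _ l
  have hε1 : ∀ i ∈ K, ε i = 1 := by
    intro i hi
    rw [hK, Finset.mem_filter] at hi
    rcases hε i hi.1 with h | h
    · exact h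
    · exact absurd h hi.2
  have hsum' : ∑ i ∈ K, l i - ∑ i ∈ J, l i = 0 := by
    have hdec : ∑ i ∈ I, ε i * l i = ∑ i ∈ K, l i + ∑ i ∈ J, (-(l i)) := by
      rw [← Finset.sum_filter_add_sum_filter_not I (fun i => ε i = -1) (fun i => ε i * l i),
        add_comm]
      congr 1
      · exact Finset.sum_congr rfl (fun i hi => by rw [hε1 i hi, one_mul])
      · exact Finset.sum_congr rfl (fun i hi => by
          rw [(Finset.mem_filter.mp hi).2]; ring)
    rw [hdec, Finset.sum_neg_distrib] at hsum
    linarith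
  have hJeq : 2 * ∑ i ∈ J, l i = ∑ i ∈ I, l i := by linarith
  have hKeq : 2 * ∑ i ∈ K, l i = ∑ i ∈ I, l i := by linarith
  have key : ∀ (M : Finset ℕ), 2 * ∑ i ∈ M, l i = ∑ i ∈ I, l i →
      ∀ a b, a ∈ M → b ∈ M → a ≠ b → n - 2 ≤ a → n - 2 ≤ b → False := by
    intro M hM a b ha hb hab ha2 hb2
    have hsub2 : ({a, b} : Finset ℕ) ⊆ M := by
      intro x hx
      simp only [Finset.mem_insert, Finset.mem_singleton] at hx
      rcases hx with rfl | rfl <;> assumption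
    have hle : ∑ i ∈ ({a, b} : Finset ℕ), l i ≤ ∑ i ∈ M, l i :=
      Finset.sum_le_sum_of_subset_of_nonneg hsub2 (fun i _ _ => (hl i).le)
    have hab' : ∑ i ∈ ({a, b} : Finset ℕ), l i = l a + l b := by
      rw [Finset.sum_insert (by simpa using hab), Finset.sum_singleton]
    have hmono2 : l (n - 2) + l (n - 1) ≤ l a + l b := by
      rcases lt_or_gt_of_ne hab with h | h
      · have h1 := hmono (show n - 1 ≤ b by omega)
        have h2 := hmono ha2
        linarith
      · have h1 := hmono (show n - 1 ≤ a by omega)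
        have h2 := hmono hb2
        linarith
    rw [hab'] at hle
    linarith
  have memJ : ∀ a, a ∈ I → ε a = -1 → a ∈ J := by
    intro a ha h; rw [hJ, Finset.mem_filter]; exact ⟨ha, h⟩
  have memK : ∀ a, a ∈ I → ¬ ε a = -1 → a ∈ K := by
    intro a ha h; rw [hK, Finset.mem_filter]; exact ⟨ha, h⟩
  by_cases hA : ε (n - 2) = -1 <;> by_cases hB : ε (n - 1) = -1 <;> by_cases hC : ε n = -1
  · exact key J hJeq (n - 2) (n - 1) (memJ _ hn2 hA) (memJ _ hn1 hB) (by omega) (by omega) (by omega)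
  · exact key J hJeq (n - 2) (n - 1) (memJ _ hn2 hA) (memJ _ hn1 hB) (by omega) (by omega) (by omega)
  · exact key J hJeq (n - 2) n (memJ _ hn2 hA) (memJ _ hnn hC) (by omega) (by omega) (by omega)
  · exact key K hKeq (n - 1) n (memK _ hn1 hB) (memK _ hnn hC) (by omega) (by omega) (by omega)
  · exact key J hJeq (n - 1) n (memJ _ hn1 hB) (memJ _ hnn hC) (by omega) (by omega) (by omega)
  · exact key K hKeq (n - 2) n (memK _ hn2 hA) (memK _ hnn hC) (by omega) (by omega) (by omega)
  · exact key K hKeq (n - 2) (n - 1) (memK _ hn2 hA) (memK _ hn1 hB) (by omega) (by omega) (by omega)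
  · exact key K hKeq (n - 2) (n - 1) (memK _ hn2 hA) (memK _ hn1 hB) (by omega) (by omega) (by omega)
end

section
/- Let l_1 ≤ ... ≤ l_n be positive reals such that {n-2,n-1} is long and {n} is short. Then a subset J ⊆ {1,...,n} containing n is short if and only if J contains neither n-2 nor n-1. -/
/-- If `{n-2, n-1}` is long and `{n}` is short, then a subset `J ⊆ {1,…,n}`
containing `n` is short iff it contains neither `n-2` nor `n-1`. -/
theorem short_iff_avoids_long_pair (n : ℕ) (hn : 3 ≤ n) (l : ℕ → ℝ)
    (hl : ∀ i, 0 < l i) (hmono : Monotone l)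
    (hlong : ∑ i ∈ Finset.Icc 1 n \ ({n - 2, n - 1} : Finset ℕ), l i <
      ∑ i ∈ ({n - 2, n - 1} : Finset ℕ), l i)
    (hshort : ∑ i ∈ ({n} : Finset ℕ), l i < ∑ i ∈ Finset.Icc 1 n \ {n}, l i) :
    ∀ J : Finset ℕ, J ⊆ Finset.Icc 1 n → n ∈ J →
      ((∑ i ∈ J, l i < ∑ i ∈ Finset.Icc 1 n \ J, l i) ↔
        (n - 2 ∉ J ∧ n - 1 ∉ J)) := by
  intro J hJ hnJ
  have ha : n - 2 ≠ n - 1 := by omega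
  have hPI : ({n - 2, n - 1} : Finset ℕ) ⊆ Finset.Icc 1 n := by
    intro x hx
    simp only [Finset.mem_insert, Finset.mem_singleton] at hx
    simp only [Finset.mem_Icc]
    omega
  have hsum_sdiff := Finset.sum_sdiff hPI (f := l)
  have hJsd := Finset.sum_sdiff hJ (f := l)
  have hpair : ∑ i ∈ ({n - 2, n - 1} : Finset ℕ), l i = l (n - 2) + l (n - 1) :=
    Finset.sum_pair ha
  have hkey : ∑ i ∈ Finset.Icc 1 n, l i
      < (l (n - 2) + l (n - 1)) + (l (n - 2) + l (n - 1)) := by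
    rw [hpair] at hsum_sdiff hlong
    linarith
  have hmono1 : l (n - 2) ≤ l n := hmono (by omega)
  have hmono2 : l (n - 1) ≤ l n := hmono (by omega)
  constructor
  · intro hshortJ
    constructor
    · intro h2
      have hsub : ({n - 2, n} : Finset ℕ) ⊆ J := by
        intro x hx
        simp only [Finset.mem_insert, Finset.mem_singleton] at hx
        rcases hx with rfl | rfl <;> assumption
      have hlb : l (n - 2) + l n ≤ ∑ i ∈ J, l i := by
        have := Finset.sum_le_sum_of_subset_of_nonneg hsub
          (fun i _ _ => (hl i).le)
        rwa [Finset.sum_pair (by omega : n - 2 ≠ n)] at this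
      linarith
    · intro h1
      have hsub : ({n - 1, n} : Finset ℕ) ⊆ J := by
        intro x hx
        simp only [Finset.mem_insert, Finset.mem_singleton] at hx
        rcases hx with rfl | rfl <;> assumption
      have hlb : l (n - 1) + l n ≤ ∑ i ∈ J, l i := by
        have := Finset.sum_le_sum_of_subset_of_nonneg hsub
          (fun i _ _ => (hl i).le)
        rwa [Finset.sum_pair (by omega : n - 1 ≠ n)] at this
      linarith
  · rintro ⟨h2, h1⟩
    have hsub : J ⊆ Finset.Icc 1 n \ ({n - 2, n - 1} : Finset ℕ) := by
      intro x hx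
      simp only [Finset.mem_sdiff, Finset.mem_insert, Finset.mem_singleton]
      refine ⟨hJ hx, ?_⟩
      rintro (rfl | rfl)
      · exact h2 hx
      · exact h1 hx
    have hub : ∑ i ∈ J, l i ≤ ∑ i ∈ Finset.Icc 1 n \ ({n - 2, n - 1} : Finset ℕ), l i :=
      Finset.sum_le_sum_of_subset_of_nonneg hsub (fun i _ _ => (hl i).le)
    rw [hpair] at hsum_sdiff
    linarith
end

section
/- Let l_1 ≤ l_2 ≤ ... ≤ l_n be positive reals and let r = ⌊(n-1)/2⌋. Let S denote the number of short subsets of {1,...,n} containing n, and M the number of median subsets containing n. Then 2S + M ≤ 2^{n-1} - binom(n-1, r). -/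
open Finset
open scoped Classical

noncomputable section

namespace TotalBetti

def fval (l : ℕ → ℝ) (m : ℕ) (B : Finset ℕ) : ℝ :=
  ∑ i ∈ B, l i - ∑ i ∈ Finset.Icc 1 m \ B, l i

def cnt (l : ℕ → ℝ) (m : ℕ) (α β : ℝ) : ℕ :=
  ((Finset.Icc 1 m).powerset.filter (fun B => α < fval l m B ∧ fval l m B ≤ β)).card

lemma fval_eq (l : ℕ → ℝ) (m : ℕ) {B : Finset ℕ} (hB : B ⊆ Finset.Icc 1 m) :
    fval l m B = 2 * ∑ i ∈ B, l i - ∑ i ∈ Finset.Icc 1 m, l i := by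
  have h := Finset.sum_sdiff (f := l) hB
  unfold fval; linarith

def iota (p : ℕ) : ℕ → ℕ := fun j => if j < p then j else j + 1

lemma iota_inj (p : ℕ) : Function.Injective (iota p) := by
  intro a b; unfold iota; split_ifs <;> omega

lemma iota_ne (p x : ℕ) : iota p x ≠ p := by
  unfold iota; split_ifs <;> omega

lemma iota_image (m p : ℕ) (hp1 : 1 ≤ p) (hpm : p ≤ m) :
    (Finset.Icc 1 (m-1)).image (iota p) = (Finset.Icc 1 m).erase p := by
  ext j
  simp only [mem_image, mem_erase, mem_Icc]
  constructor
  · rintro ⟨a, ha, rfl⟩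
    unfold iota; split_ifs <;> omega
  · rintro ⟨hjp, hj1, hjm⟩
    refine ⟨if j < p then j else j - 1, ?_, ?_⟩
    · split_ifs <;> omega
    · unfold iota; split_ifs <;> omega

lemma sum_iota (l : ℕ → ℝ) (p : ℕ) (B' : Finset ℕ) :
    ∑ i ∈ B'.image (iota p), l i = ∑ i ∈ B', (if i < p then l i else l (i+1)) := by
  rw [Finset.sum_image (fun a _ b _ h => iota_inj p h)]
  apply Finset.sum_congr rfl
  intro i _
  unfold iota; split_ifs <;> rfl

lemma T_split (l : ℕ → ℝ) (m p : ℕ) (hp1 : 1 ≤ p) (hpm : p ≤ m) :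
    ∑ i ∈ Finset.Icc 1 m, l i
      = l p + ∑ i ∈ Finset.Icc 1 (m-1), (if i < p then l i else l (i+1)) := by
  rw [← sum_iota, iota_image m p hp1 hpm]
  rw [← Finset.add_sum_erase _ l (Finset.mem_Icc.mpr ⟨hp1, hpm⟩)]

lemma image_filter_eq (m p : ℕ) (hp1 : 1 ≤ p) (hpm : p ≤ m) {B : Finset ℕ}
    (hB : B ⊆ (Finset.Icc 1 m).erase p) :
    ((Finset.Icc 1 (m-1)).filter (fun x => iota p x ∈ B)).image (iota p) = B := by
  ext j
  simp only [mem_image, mem_filter]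
  constructor
  · rintro ⟨a, ⟨_, ha2⟩, rfl⟩; exact ha2
  · intro hj
    have hj' : j ∈ (Finset.Icc 1 m).erase p := hB hj
    rw [← iota_image m p hp1 hpm] at hj'
    obtain ⟨a, ha, rfl⟩ := Finset.mem_image.mp hj'
    exact ⟨a, ⟨ha, hj⟩, rfl⟩

lemma filter_image_eq (m p : ℕ) (B' : Finset ℕ) (hB' : B' ⊆ Finset.Icc 1 (m-1)) :
    (Finset.Icc 1 (m-1)).filter (fun x => iota p x ∈ B'.image (iota p)) = B' := by
  ext a
  simp only [mem_filter, mem_image]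
  constructor
  · rintro ⟨ha, b, hb, hba⟩
    have := iota_inj p hba
    rwa [← this]
  · intro ha
    exact ⟨hB' ha, a, ha, rfl⟩

lemma cnt_split (l : ℕ → ℝ) (m p : ℕ) (hp1 : 1 ≤ p) (hpm : p ≤ m) (α β : ℝ) :
    cnt l m α β
      = cnt (fun i => if i < p then l i else l (i+1)) (m-1) (α + l p) (β + l p)
        + cnt (fun i => if i < p then l i else l (i+1)) (m-1) (α - l p) (β - l p) := by
  classical
  set l' : ℕ → ℝ := fun i => if i < p then l i else l (i+1) with hl'
  have hpIcc : p ∈ Finset.Icc 1 m := Finset.mem_Icc.mpr ⟨hp1, hpm⟩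
  -- fval transport, parent without p
  have hfv_out : ∀ B' : Finset ℕ, B' ⊆ Finset.Icc 1 (m-1) →
      fval l m (B'.image (iota p)) = fval l' (m-1) B' - l p := by
    intro B' hB'
    have h1 : B'.image (iota p) ⊆ Finset.Icc 1 m := by
      refine subset_trans ?_ (Finset.erase_subset p (Finset.Icc 1 m))
      rw [← iota_image m p hp1 hpm]
      exact Finset.image_subset_image hB'
    rw [fval_eq l m h1, fval_eq l' (m-1) hB', sum_iota l p B', T_split l m p hp1 hpm]
    ring
  have hfv_in : ∀ B' : Finset ℕ, B' ⊆ Finset.Icc 1 (m-1) →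
      fval l m (insert p (B'.image (iota p))) = fval l' (m-1) B' + l p := by
    intro B' hB'
    have hpnot : p ∉ B'.image (iota p) := by
      intro h
      obtain ⟨a, _, ha⟩ := Finset.mem_image.mp h
      exact iota_ne p a ha
    have h1 : insert p (B'.image (iota p)) ⊆ Finset.Icc 1 m := by
      apply Finset.insert_subset hpIcc
      refine subset_trans ?_ (Finset.erase_subset p (Finset.Icc 1 m))
      rw [← iota_image m p hp1 hpm]
      exact Finset.image_subset_image hB'
    rw [fval_eq l m h1, fval_eq l' (m-1) hB', Finset.sum_insert hpnot, sum_iota l p B',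
      T_split l m p hp1 hpm]
    ring
  -- split parent count by membership of p
  have hsplit :
      cnt l m α β
        = (((Finset.Icc 1 m).powerset.filter (fun B => α < fval l m B ∧ fval l m B ≤ β)).filter
            (fun B => p ∉ B)).card
          + (((Finset.Icc 1 m).powerset.filter (fun B => α < fval l m B ∧ fval l m B ≤ β)).filter
            (fun B => p ∈ B)).card := by
    unfold cnt
    rw [add_comm]
    rw [← Finset.card_filter_add_card_filter_not (fun B => p ∈ B)]
  rw [hsplit]
  congr 1
  · -- without p  ↔  child window (α + l p, β + l p]
    unfold cnt
    symm
    apply Finset.card_nbij' (fun B' => B'.image (iota p))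
      (fun B => (Finset.Icc 1 (m-1)).filter (fun x => iota p x ∈ B))
    · intro B' hB'
      simp only [Finset.mem_filter, Finset.mem_powerset, Finset.mem_coe] at hB' ⊢
      obtain ⟨hsub, h1, h2⟩ := hB'
      have hout := hfv_out B' hsub
      refine ⟨⟨?_, ?_⟩, ?_⟩
      · refine subset_trans ?_ (Finset.erase_subset p (Finset.Icc 1 m))
        rw [← iota_image m p hp1 hpm]
        exact Finset.image_subset_image hsub
      · rw [hout]; constructor <;> linarith
      · intro h
        obtain ⟨a, _, ha⟩ := Finset.mem_image.mp h
        exact iota_ne p a ha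
    · intro B hB
      simp only [Finset.mem_filter, Finset.mem_powerset, Finset.mem_coe] at hB ⊢
      obtain ⟨⟨hsub, h1, h2⟩, hpB⟩ := hB
      have hBsub : B ⊆ (Finset.Icc 1 m).erase p := by
        intro x hx
        exact Finset.mem_erase.mpr ⟨fun hxp => hpB (hxp ▸ hx), hsub hx⟩
      have himg := image_filter_eq m p hp1 hpm hBsub
      have hsub' : (Finset.Icc 1 (m-1)).filter (fun x => iota p x ∈ B) ⊆ Finset.Icc 1 (m-1) :=
        Finset.filter_subset _ _
      have hout := hfv_out _ hsub'
      rw [himg] at hout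
      exact ⟨hsub', by constructor <;> linarith⟩
    · intro B' hB'
      simp only [Finset.mem_filter, Finset.mem_powerset, Finset.mem_coe] at hB'
      exact filter_image_eq m p B' hB'.1
    · intro B hB
      simp only [Finset.mem_filter, Finset.mem_powerset, Finset.mem_coe] at hB
      obtain ⟨⟨hsub, _⟩, hpB⟩ := hB
      apply image_filter_eq m p hp1 hpm
      intro x hx
      exact Finset.mem_erase.mpr ⟨fun hxp => hpB (hxp ▸ hx), hsub hx⟩
  · -- with p  ↔  child window (α - l p, β - l p]
    unfold cnt
    symm
    apply Finset.card_nbij' (fun B' => insert p (B'.image (iota p)))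
      (fun B => (Finset.Icc 1 (m-1)).filter (fun x => iota p x ∈ B))
    · intro B' hB'
      simp only [Finset.mem_filter, Finset.mem_powerset, Finset.mem_coe] at hB' ⊢
      obtain ⟨hsub, h1, h2⟩ := hB'
      have hin := hfv_in B' hsub
      refine ⟨⟨?_, ?_⟩, Finset.mem_insert_self p _⟩
      · apply Finset.insert_subset hpIcc
        refine subset_trans ?_ (Finset.erase_subset p (Finset.Icc 1 m))
        rw [← iota_image m p hp1 hpm]
        exact Finset.image_subset_image hsub
      · rw [hin]; constructor <;> linarith
    · intro B hB
      simp only [Finset.mem_filter, Finset.mem_powerset, Finset.mem_coe] at hB ⊢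
      obtain ⟨⟨hsub, h1, h2⟩, hpB⟩ := hB
      have hBsub : B.erase p ⊆ (Finset.Icc 1 m).erase p := Finset.erase_subset_erase p hsub
      have himg := image_filter_eq m p hp1 hpm hBsub
      have hfe : (Finset.Icc 1 (m-1)).filter (fun x => iota p x ∈ B)
          = (Finset.Icc 1 (m-1)).filter (fun x => iota p x ∈ B.erase p) := by
        apply Finset.filter_congr
        intro x _
        simp only [Finset.mem_erase]
        constructor
        · intro h; exact ⟨iota_ne p x, h⟩
        · exact fun h => h.2
      have hsub' : (Finset.Icc 1 (m-1)).filter (fun x => iota p x ∈ B.erase p) ⊆ Finset.Icc 1 (m-1) :=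
        Finset.filter_subset _ _
      have hin := hfv_in _ hsub'
      rw [himg, Finset.insert_erase hpB] at hin
      rw [hfe]
      exact ⟨hsub', by constructor <;> linarith⟩
    · intro B' hB'
      simp only [Finset.mem_filter, Finset.mem_powerset, Finset.mem_coe] at hB'
      have : (Finset.Icc 1 (m-1)).filter (fun x => iota p x ∈ insert p (B'.image (iota p)))
          = (Finset.Icc 1 (m-1)).filter (fun x => iota p x ∈ B'.image (iota p)) := by
        apply Finset.filter_congr
        intro x _
        simp only [Finset.mem_insert]
        constructor
        · rintro (h | h)
          · exact absurd h (iota_ne p x)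
          · exact h
        · exact fun h => Or.inr h
      dsimp only
      rw [this]
      exact filter_image_eq m p B' hB'.1
    · intro B hB
      simp only [Finset.mem_filter, Finset.mem_powerset, Finset.mem_coe] at hB
      obtain ⟨⟨hsub, _⟩, hpB⟩ := hB
      have hBsub : B.erase p ⊆ (Finset.Icc 1 m).erase p := Finset.erase_subset_erase p hsub
      have hfe : (Finset.Icc 1 (m-1)).filter (fun x => iota p x ∈ B)
          = (Finset.Icc 1 (m-1)).filter (fun x => iota p x ∈ B.erase p) := by
        apply Finset.filter_congr
        intro x _
        simp only [Finset.mem_erase]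
        constructor
        · intro h; exact ⟨iota_ne p x, h⟩
        · exact fun h => h.2
      dsimp only
      rw [hfe, image_filter_eq m p hp1 hpm hBsub, Finset.insert_erase hpB]


lemma cnt_pos (l : ℕ → ℝ) (m : ℕ) (hl : ∀ i, 0 < l i) (hmono : Monotone l)
    (t α β : ℝ) (hlm : l m ≤ t) (h2t : 2*t ≤ β - α)
    (hα : α < ∑ i ∈ Finset.Icc 1 m, l i) (hβ : -∑ i ∈ Finset.Icc 1 m, l i ≤ β) :
    1 ≤ cnt l m α β := by
  classical
  set T : ℝ := ∑ i ∈ Finset.Icc 1 m, l i with hT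
  set A := (Finset.Icc 1 m).powerset.filter (fun B => fval l m B ≤ β) with hA
  have hemp : (∅ : Finset ℕ) ∈ A := by
    rw [hA]
    simp only [Finset.mem_filter, Finset.mem_powerset, Finset.mem_coe]
    refine ⟨Finset.empty_subset _, ?_⟩
    rw [fval_eq l m (Finset.empty_subset _)]
    simp only [Finset.sum_empty]
    linarith
  obtain ⟨B, hBA, hBmax⟩ := Finset.exists_max_image A (fval l m) ⟨∅, hemp⟩
  simp only [hA, Finset.mem_filter, Finset.mem_powerset, Finset.mem_coe] at hBA
  obtain ⟨hBsub, hBβ⟩ := hBA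
  by_cases hcase : α < fval l m B
  · rw [cnt]
    refine Nat.one_le_iff_ne_zero.mpr (Finset.card_ne_zero_of_mem (a := B) ?_)
    simp only [Finset.mem_filter, Finset.mem_powerset, Finset.mem_coe]
    exact ⟨hBsub, hcase, hBβ⟩
  · exfalso
    push_neg at hcase
    have hBne : B ≠ Finset.Icc 1 m := by
      intro h
      rw [h] at hcase
      rw [fval_eq l m (Finset.Subset.refl _)] at hcase
      have hT0 : 0 ≤ T := Finset.sum_nonneg (fun i _ => (hl i).le)
      rw [← hT] at hcase
      linarith
    obtain ⟨i, hiIcc, hiB⟩ := Finset.exists_of_ssubset (lt_of_le_of_ne hBsub hBne)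
    have hins : insert i B ⊆ Finset.Icc 1 m := Finset.insert_subset hiIcc hBsub
    have hfins : fval l m (insert i B) = fval l m B + 2 * l i := by
      rw [fval_eq l m hins, fval_eq l m hBsub, Finset.sum_insert hiB]
      ring
    have hli : l i ≤ t := by
      have : i ≤ m := (Finset.mem_Icc.mp hiIcc).2
      exact le_trans (hmono this) hlm
    have hinsA : insert i B ∈ A := by
      rw [hA]
      simp only [Finset.mem_filter, Finset.mem_powerset, Finset.mem_coe]
      exact ⟨hins, by rw [hfins]; linarith⟩
    have := hBmax _ hinsA
    rw [hfins] at this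
    have := hl i
    linarith


lemma claim : ∀ (m k : ℕ) (l : ℕ → ℝ), 2*k ≤ m → (∀ i, 0 < l i) → Monotone l →
    ∀ t α β : ℝ, l m ≤ t → 0 < t → 2*t ≤ β - α →
    α < ∑ i ∈ Finset.Icc 1 (m - 2*k), l i →
    -∑ i ∈ Finset.Icc 1 (m - 2*k), l i ≤ β →
    m.choose k ≤ cnt l m α β := by
  intro m
  induction m using Nat.strong_induction_on with
  | _ m ih =>
  intro k l hkm hl hmono t α β hlm ht h2t hα hβ
  rcases Nat.eq_zero_or_pos k with k0 | kpos
  · -- k = 0 : gap lemma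
    subst k0
    simp only [Nat.choose_zero_right]
    simp only [Nat.mul_zero, Nat.sub_zero] at hα hβ
    exact cnt_pos l m hl hmono t α β hlm h2t hα hβ
  · -- k ≥ 1
    have hm2 : 2 ≤ m := by omega
    set e : ℕ := m - 2*k with he
    set p : ℕ := e + 1 with hp
    have hp1 : 1 ≤ p := by omega
    have hpm1 : p ≤ m - 1 := by omega
    have hpm : p ≤ m := by omega
    set l' : ℕ → ℝ := fun i => if i < p then l i else l (i+1) with hl'def
    have hl'pos : ∀ i, 0 < l' i := by
      intro i; rw [hl'def]; dsimp only; split_ifs <;> exact hl _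
    have hl'mono : Monotone l' := by
      intro a b hab
      rw [hl'def]; dsimp only
      split_ifs with h1 h2 h2
      · exact hmono hab
      · exact hmono (by omega)
      · omega
      · exact hmono (by omega)
    have hl'm : l' (m-1) ≤ t := by
      rw [hl'def]; dsimp only
      rw [if_neg (by omega)]
      have : m - 1 + 1 = m := by omega
      rw [this]; exact hlm
    have hq : l p ≤ t := le_trans (hmono hpm) hlm
    have hqpos : 0 < l p := hl p
    -- parent σ_e
    have hαe : α < ∑ i ∈ Finset.Icc 1 e, l i := hα
    have hβe : -∑ i ∈ Finset.Icc 1 e, l i ≤ β := hβ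
    -- child index arithmetic
    have hidx1 : m - 1 - 2*k = e - 1 := by omega
    have hidx2 : m - 1 - 2*(k-1) = e + 1 := by omega
    -- child σ sums
    have hsum_le : ∀ j, j ≤ e → ∑ i ∈ Finset.Icc 1 j, l' i = ∑ i ∈ Finset.Icc 1 j, l i := by
      intro j hj
      apply Finset.sum_congr rfl
      intro i hi
      have := (Finset.mem_Icc.mp hi).2
      rw [hl'def]; dsimp only
      rw [if_pos (by omega)]
    have hwidth : ∀ c : ℝ, 2*t ≤ (β + c) - (α + c) := by intro c; linarith
    have hwidth' : ∀ c : ℝ, 2*t ≤ (β - c) - (α - c) := by intro c; linarith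
    -- pascal
    rcases Nat.eq_zero_or_pos e with e0 | epos
    · -- e = 0, p = 1, both children (m-1, k-1)
      have hkm' : 2*(k-1) ≤ m - 1 := by omega
      have hσ0 : ∑ i ∈ Finset.Icc 1 e, l i = 0 := by
        rw [e0]; simp
      rw [hσ0] at hαe hβe
      have hσ1' : ∑ i ∈ Finset.Icc 1 (e+1), l' i = l (e+2) := by
        rw [e0]
        simp only [Finset.Icc_self, Finset.sum_singleton]
        rw [hl'def]; dsimp only
        rw [if_neg (by omega)]
      have h12 : l 1 ≤ l 2 := hmono (by omega)
      have hp1eq : p = 1 := by rw [hp, e0]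
      have child1 : (m-1).choose (k-1) ≤ cnt l' (m-1) (α + l p) (β + l p) := by
        apply ih (m-1) (by omega) (k-1) l' hkm' hl'pos hl'mono t _ _ hl'm ht (hwidth _)
        · rw [hidx2, hσ1', hp1eq]
          have : l (e+2) = l 2 := by rw [e0]
          rw [this]
          linarith
        · rw [hidx2, hσ1', hp1eq]
          have : l (e+2) = l 2 := by rw [e0]
          rw [this]
          linarith [hl 1, hl 2]
      have child2 : (m-1).choose (k-1) ≤ cnt l' (m-1) (α - l p) (β - l p) := by
        apply ih (m-1) (by omega) (k-1) l' hkm' hl'pos hl'mono t _ _ hl'm ht (hwidth' _)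
        · rw [hidx2, hσ1', hp1eq]
          have : l (e+2) = l 2 := by rw [e0]
          rw [this]
          linarith [hl 1, hl 2]
        · rw [hidx2, hσ1', hp1eq]
          have : l (e+2) = l 2 := by rw [e0]
          rw [this]
          linarith
      have h1 : m.choose k = (m-1).choose (k-1) + (m-1).choose k := by
        have hps := Nat.choose_succ_succ (m-1) (k-1)
        simp only [Nat.succ_eq_add_one] at hps
        have hm1 : m - 1 + 1 = m := by omega
        have hk1 : k - 1 + 1 = k := by omega
        rw [hm1, hk1] at hps
        exact hps
      have h2 : (m-1).choose k = (m-1).choose (k-1) := by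
        have hd : (m-1) - k = k - 1 := by omega
        rw [← hd]
        exact (Nat.choose_symm (show k ≤ m - 1 by omega)).symm
      have hchoose : m.choose k ≤ (m-1).choose (k-1) + (m-1).choose (k-1) := by omega
      have hsp : cnt l m α β = cnt l' (m-1) (α + l p) (β + l p) + cnt l' (m-1) (α - l p) (β - l p) :=
        cnt_split l m p hp1 hpm α β
      omega
    · -- e ≥ 1
      have hkm1 : 2*k ≤ m - 1 := by omega
      have hkm' : 2*(k-1) ≤ m - 1 := by omega
      have hσe1_le : ∑ i ∈ Finset.Icc 1 (e-1), l' i = ∑ i ∈ Finset.Icc 1 (e-1), l i :=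
        hsum_le _ (by omega)
      have hσe_le : ∑ i ∈ Finset.Icc 1 e, l' i = ∑ i ∈ Finset.Icc 1 e, l i :=
        hsum_le _ (by omega)
      have hσsucc : ∑ i ∈ Finset.Icc 1 e, l i = ∑ i ∈ Finset.Icc 1 (e-1), l i + l e := by
        have h : e - 1 + 1 = e := by omega
        conv_lhs => rw [← h]
        rw [Finset.sum_Icc_succ_top (by omega : 1 ≤ e - 1 + 1)]
        rw [h]
      have hσ2' : ∑ i ∈ Finset.Icc 1 (e+1), l' i = ∑ i ∈ Finset.Icc 1 e, l i + l (e+2) := by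
        rw [Finset.sum_Icc_succ_top (by omega : 1 ≤ e + 1), hσe_le]
        congr 1
        rw [hl'def]; dsimp only
        rw [if_neg (by omega)]
      have hσe1_nonneg : (0:ℝ) ≤ ∑ i ∈ Finset.Icc 1 (e-1), l i :=
        Finset.sum_nonneg (fun i _ => (hl i).le)
      have hle_ep1 : l e ≤ l (e+1) := hmono (by omega)
      have hlp_e2 : l (e+1) ≤ l (e+2) := hmono (by omega)
      have hlpeq : l p = l (e+1) := by rw [hp]
      have hchoose : m.choose k = (m-1).choose (k-1) + (m-1).choose k := by
        have hps := Nat.choose_succ_succ (m-1) (k-1)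
        simp only [Nat.succ_eq_add_one] at hps
        have hm1 : m - 1 + 1 = m := by omega
        have hk1 : k - 1 + 1 = k := by omega
        rw [hm1, hk1] at hps
        exact hps
      have hsp : cnt l m α β = cnt l' (m-1) (α + l p) (β + l p) + cnt l' (m-1) (α - l p) (β - l p) :=
        cnt_split l m p hp1 hpm α β
      by_cases hbr : l p - ∑ i ∈ Finset.Icc 1 (e-1), l i ≤ β
      · -- branch 1: child₋ (with p) gets k, child₊ gets k-1
        have childminus : (m-1).choose k ≤ cnt l' (m-1) (α - l p) (β - l p) := by
          apply ih (m-1) (by omega) k l' hkm1 hl'pos hl'mono t _ _ hl'm ht (hwidth' _)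
          · rw [hidx1, hσe1_le]
            rw [hσsucc] at hαe
            rw [hlpeq]
            linarith
          · rw [hidx1, hσe1_le]
            linarith
        have childplus : (m-1).choose (k-1) ≤ cnt l' (m-1) (α + l p) (β + l p) := by
          apply ih (m-1) (by omega) (k-1) l' hkm' hl'pos hl'mono t _ _ hl'm ht (hwidth _)
          · rw [hidx2, hσ2']
            rw [hlpeq]
            linarith
          · rw [hidx2, hσ2']
            have : (0:ℝ) < l (e+2) := hl _
            linarith
        omega
      · -- branch 2: child₊ gets k, child₋ gets k-1
        push_neg at hbr
        have childplus : (m-1).choose k ≤ cnt l' (m-1) (α + l p) (β + l p) := by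
          apply ih (m-1) (by omega) k l' hkm1 hl'pos hl'mono t _ _ hl'm ht (hwidth _)
          · rw [hidx1, hσe1_le]
            -- α + l p < σ_{e-1} : from α ≤ β - 2t < (l p - σ_{e-1}) - 2t
            linarith
          · rw [hidx1, hσe1_le]
            rw [hσsucc] at hβe
            rw [hlpeq]
            linarith
        have childminus : (m-1).choose (k-1) ≤ cnt l' (m-1) (α - l p) (β - l p) := by
          apply ih (m-1) (by omega) (k-1) l' hkm' hl'pos hl'mono t _ _ hl'm ht (hwidth' _)
          · rw [hidx2, hσ2']
            have : (0:ℝ) < l (e+2) := hl _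
            linarith
          · rw [hidx2, hσ2']
            rw [hlpeq]
            linarith
        omega


end TotalBetti

open TotalBetti

/-- Upper bound on the total Betti number: for a sorted positive length
vector, twice the number of short subsets containing `n` plus the number of
median subsets containing `n` is at most `2^{n-1} - binom (n-1) ⌊(n-1)/2⌋`. -/
theorem total_betti_upper_bound (n : ℕ) (hn : 1 ≤ n) (l : ℕ → ℝ)
    (hl : ∀ i, 0 < l i) (hmono : Monotone l) :
    2 * ((Finset.Icc 1 n).powerset.filter (fun J => n ∈ J ∧
        (∑ i ∈ J, l i < ∑ i ∈ Finset.Icc 1 n \ J, l i))).card +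
      ((Finset.Icc 1 n).powerset.filter (fun J => n ∈ J ∧
        (∑ i ∈ J, l i = ∑ i ∈ Finset.Icc 1 n \ J, l i))).card ≤
    2 ^ (n - 1) - (n - 1).choose ((n - 1) / 2) := by
  classical
  set t : ℝ := l n with ht
  have htpos : 0 < t := hl n
  have hnIcc : n ∈ Finset.Icc 1 n := Finset.mem_Icc.mpr ⟨hn, le_refl n⟩
  have hnotIcc : n ∉ Finset.Icc 1 (n-1) := by
    simp only [Finset.mem_Icc]; omega
  -- the four classes
  set F1 := (Finset.Icc 1 n).powerset.filter
      (fun J => n ∈ J ∧ fval l n J < 0) with hF1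
  set F2 := (Finset.Icc 1 n).powerset.filter
      (fun J => n ∈ J ∧ fval l n J = 0) with hF2
  set F3 := (Finset.Icc 1 n).powerset.filter
      (fun J => n ∈ J ∧ (0 < fval l n J ∧ fval l n J ≤ 2*t)) with hF3
  set F4 := (Finset.Icc 1 n).powerset.filter
      (fun J => n ∈ J ∧ 2*t < fval l n J) with hF4
  -- identify statement sets with F1, F2
  have hstmt1 : ((Finset.Icc 1 n).powerset.filter (fun J => n ∈ J ∧
        (∑ i ∈ J, l i < ∑ i ∈ Finset.Icc 1 n \ J, l i))).card = F1.card := by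
    rw [hF1]
    congr 1
    apply Finset.filter_congr
    intro J _
    unfold fval
    constructor
    · rintro ⟨h1, h2⟩; exact ⟨h1, by linarith⟩
    · rintro ⟨h1, h2⟩; exact ⟨h1, by linarith⟩
  have hstmt2 : ((Finset.Icc 1 n).powerset.filter (fun J => n ∈ J ∧
        (∑ i ∈ J, l i = ∑ i ∈ Finset.Icc 1 n \ J, l i))).card = F2.card := by
    rw [hF2]
    congr 1
    apply Finset.filter_congr
    intro J _
    unfold fval
    constructor
    · rintro ⟨h1, h2⟩; exact ⟨h1, by linarith⟩
    · rintro ⟨h1, h2⟩; exact ⟨h1, by linarith⟩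
  -- card of Omega
  have hΩcard : ((Finset.Icc 1 n).powerset.filter (fun J => n ∈ J)).card = 2^(n-1) := by
    have hbij : ((Finset.Icc 1 n).powerset.filter (fun J => n ∈ J)).card
        = (Finset.Icc 1 (n-1)).powerset.card := by
      apply Finset.card_nbij' (fun J => J.erase n) (fun B => insert n B)
      · intro J hJ
        simp only [Finset.mem_filter, Finset.mem_powerset, Finset.mem_coe] at hJ ⊢
        intro x hx
        simp only [Finset.mem_erase] at hx
        have := hJ.1 hx.2
        simp only [Finset.mem_Icc] at this ⊢
        have hxn : x ≠ n := hx.1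
        omega
      · intro B hB
        simp only [Finset.mem_filter, Finset.mem_powerset, Finset.mem_coe] at hB ⊢
        refine ⟨Finset.insert_subset hnIcc ?_, Finset.mem_insert_self n B⟩
        intro x hx
        have := hB hx
        simp only [Finset.mem_Icc] at this ⊢
        omega
      · intro J hJ
        simp only [Finset.mem_filter, Finset.mem_powerset, Finset.mem_coe] at hJ
        exact Finset.insert_erase hJ.2
      · intro B hB
        simp only [Finset.mem_powerset, Finset.mem_coe] at hB
        apply Finset.erase_insert
        intro h
        exact hnotIcc (hB h)
    rw [hbij, Finset.card_powerset, Nat.card_Icc]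
    have h : n - 1 + 1 - 1 = n - 1 := by omega
    rw [h]
  -- disjointness and union bound
  have hsub : ∀ (G : Finset (Finset ℕ)), G = F1 ∨ G = F2 ∨ G = F3 ∨ G = F4 →
      G ⊆ (Finset.Icc 1 n).powerset.filter (fun J => n ∈ J) := by
    intro G hG
    rcases hG with rfl | rfl | rfl | rfl <;>
    · intro J hJ
      simp only [hF1, hF2, hF3, hF4, Finset.mem_filter, Finset.mem_powerset, Finset.mem_coe] at hJ ⊢
      exact ⟨hJ.1, hJ.2.1⟩
  have hcards : F1.card + F2.card + F3.card + F4.card ≤ 2^(n-1) := by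
    have hd12 : Disjoint F1 F2 := by
      rw [Finset.disjoint_left]
      intro J h1 h2
      simp only [hF1, hF2, Finset.mem_filter] at h1 h2
      linarith [h1.2.2, h2.2.2]
    have hd123 : Disjoint (F1 ∪ F2) F3 := by
      rw [Finset.disjoint_left]
      intro J h1 h3
      simp only [hF3, Finset.mem_filter] at h3
      rcases Finset.mem_union.mp h1 with h | h <;>
        simp only [hF1, hF2, Finset.mem_filter] at h
      · linarith [h.2.2, h3.2.2.1]
      · linarith [h.2.2, h3.2.2.1]
    have hd1234 : Disjoint (F1 ∪ F2 ∪ F3) F4 := by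
      rw [Finset.disjoint_left]
      intro J h1 h4
      simp only [hF4, Finset.mem_filter] at h4
      rcases Finset.mem_union.mp h1 with h | h
      · rcases Finset.mem_union.mp h with h' | h' <;>
          simp only [hF1, hF2, Finset.mem_filter] at h'
        · linarith [h'.2.2, h4.2.2]
        · linarith [h'.2.2, h4.2.2]
      · simp only [hF3, Finset.mem_filter] at h
        linarith [h.2.2.2, h4.2.2]
    calc F1.card + F2.card + F3.card + F4.card
        = (F1 ∪ F2 ∪ F3 ∪ F4).card := by
          rw [Finset.card_union_of_disjoint hd1234, Finset.card_union_of_disjoint hd123,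
            Finset.card_union_of_disjoint hd12]
      _ ≤ ((Finset.Icc 1 n).powerset.filter (fun J => n ∈ J)).card := by
          apply Finset.card_le_card
          intro J hJ
          rcases Finset.mem_union.mp hJ with h | h
          · rcases Finset.mem_union.mp h with h' | h'
            · rcases Finset.mem_union.mp h' with h'' | h''
              · exact hsub F1 (Or.inl rfl) h''
              · exact hsub F2 (Or.inr (Or.inl rfl)) h''
            · exact hsub F3 (Or.inr (Or.inr (Or.inl rfl))) h'
          · exact hsub F4 (Or.inr (Or.inr (Or.inr rfl))) h
      _ = 2^(n-1) := hΩcard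
  have hcompl : ∀ J : Finset ℕ, J ⊆ Finset.Icc 1 n →
      Finset.Icc 1 n \ insert n (Finset.Icc 1 n \ J) = J.erase n := by
    intro J hJsub
    ext x
    simp only [Finset.mem_sdiff, Finset.mem_insert, Finset.mem_erase]
    constructor
    · rintro ⟨hx1, hx2⟩
      refine ⟨fun hxn => hx2 (Or.inl hxn), ?_⟩
      by_contra hxJ
      exact hx2 (Or.inr ⟨hx1, hxJ⟩)
    · rintro ⟨hxn, hxJ⟩
      exact ⟨hJsub hxJ, fun h => h.elim hxn (fun h' => h'.2 hxJ)⟩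
  -- reflection: card F1 ≤ card F4
  have hrefl : F1.card ≤ F4.card := by
    apply Finset.card_le_card_of_injOn (fun J => insert n (Finset.Icc 1 n \ J))
    · intro J hJ
      simp only [hF1, Finset.mem_filter, Finset.mem_powerset, Finset.mem_coe] at hJ
      obtain ⟨hJsub, hJn, hJneg⟩ := hJ
      have hcompl_sub : Finset.Icc 1 n \ J ⊆ Finset.Icc 1 n := Finset.sdiff_subset
      have hnmem : n ∉ Finset.Icc 1 n \ J := by
        simp only [Finset.mem_sdiff]
        intro h; exact h.2 hJn
      have hsum1 : ∑ i ∈ insert n (Finset.Icc 1 n \ J), l i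
          = t + ∑ i ∈ Finset.Icc 1 n \ J, l i := by
        rw [Finset.sum_insert hnmem, ht]
      have hcompl2 := hcompl J hJsub
      have hsum2 : ∑ i ∈ Finset.Icc 1 n \ insert n (Finset.Icc 1 n \ J), l i
          = ∑ i ∈ J, l i - t := by
        rw [hcompl2, ht]
        have := Finset.add_sum_erase J l hJn
        linarith
      simp only [hF4, Finset.mem_filter, Finset.mem_powerset, Finset.mem_coe]
      refine ⟨Finset.insert_subset hnIcc hcompl_sub, Finset.mem_insert_self _ _, ?_⟩
      unfold fval at hJneg ⊢
      rw [hsum1, hsum2]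
      linarith
    · intro J hJ J' hJ' heq
      simp only [hF1, Finset.coe_filter, Set.mem_setOf_eq, Finset.mem_powerset, Finset.mem_coe] at hJ hJ'
      have h1 := hcompl J hJ.1
      have h2 := hcompl J' hJ'.1
      have : J.erase n = J'.erase n := by
        rw [← h1, ← h2]
        exact congrArg (fun s => Finset.Icc 1 n \ s) heq
      calc J = insert n (J.erase n) := (Finset.insert_erase hJ.2.1).symm
        _ = insert n (J'.erase n) := by rw [this]
        _ = J' := Finset.insert_erase hJ'.2.1
  -- band: card F3 ≥ choose
  have hband : (n-1).choose ((n-1)/2) ≤ F3.card := by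
    have hF3cnt : F3.card = cnt l (n-1) (-t) t := by
      unfold cnt
      apply Finset.card_nbij' (fun J => J.erase n) (fun B => insert n B)
      · intro J hJ
        simp only [hF3, Finset.mem_filter, Finset.mem_powerset, Finset.mem_coe] at hJ ⊢
        obtain ⟨hJsub, hJn, hJ0, hJ2t⟩ := hJ
        have herase_sub : J.erase n ⊆ Finset.Icc 1 (n-1) := by
          intro x hx
          simp only [Finset.mem_erase] at hx
          have := hJsub hx.2
          simp only [Finset.mem_Icc] at this ⊢
          have hxn : x ≠ n := hx.1
          omega
        refine ⟨herase_sub, ?_⟩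
        have hkey : fval l n J = fval l (n-1) (J.erase n) + t := by
          rw [fval_eq l n hJsub, fval_eq l (n-1) herase_sub]
          have hsumJ : ∑ i ∈ J, l i = t + ∑ i ∈ J.erase n, l i := by
            rw [ht]; exact (Finset.add_sum_erase J l hJn).symm
          have hTn : ∑ i ∈ Finset.Icc 1 n, l i
              = ∑ i ∈ Finset.Icc 1 (n-1), l i + t := by
            have h : n - 1 + 1 = n := by omega
            rw [ht]
            conv_lhs => rw [← h]
            rw [Finset.sum_Icc_succ_top (by omega : 1 ≤ n - 1 + 1), h]
          rw [hsumJ, hTn]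
          ring
        rw [hkey] at hJ0 hJ2t
        constructor <;> linarith
      · intro B hB
        simp only [hF3, Finset.mem_filter, Finset.mem_powerset, Finset.mem_coe] at hB ⊢
        obtain ⟨hBsub, hB1, hB2⟩ := hB
        have hBsub' : B ⊆ Finset.Icc 1 n := by
          intro x hx
          have := hBsub hx
          simp only [Finset.mem_Icc] at this ⊢
          omega
        have hins_sub : insert n B ⊆ Finset.Icc 1 n := Finset.insert_subset hnIcc hBsub'
        refine ⟨hins_sub, Finset.mem_insert_self _ _, ?_⟩
        have hnB : n ∉ B := fun h => hnotIcc (hBsub h)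
        have hkey : fval l n (insert n B) = fval l (n-1) B + t := by
          rw [fval_eq l n hins_sub, fval_eq l (n-1) hBsub]
          have hsum : ∑ i ∈ insert n B, l i = t + ∑ i ∈ B, l i := by
            rw [Finset.sum_insert hnB, ht]
          have hTn : ∑ i ∈ Finset.Icc 1 n, l i
              = ∑ i ∈ Finset.Icc 1 (n-1), l i + t := by
            have h : n - 1 + 1 = n := by omega
            rw [ht]
            conv_lhs => rw [← h]
            rw [Finset.sum_Icc_succ_top (by omega : 1 ≤ n - 1 + 1), h]
          rw [hsum, hTn]
          ring
        rw [hkey]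
        constructor <;> linarith
      · intro J hJ
        simp only [hF3, Finset.mem_filter, Finset.mem_powerset, Finset.mem_coe] at hJ
        exact Finset.insert_erase hJ.2.1
      · intro B hB
        simp only [Finset.mem_filter, Finset.mem_powerset, Finset.mem_coe] at hB
        apply Finset.erase_insert
        intro h
        exact hnotIcc (hB.1 h)
    rw [hF3cnt]
    apply claim (n-1) ((n-1)/2) l (by omega) hl hmono t (-t) t
    · exact hmono (by omega)
    · exact htpos
    · linarith
    · have : (0:ℝ) ≤ ∑ i ∈ Finset.Icc 1 (n - 1 - 2*((n-1)/2)), l i :=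
        Finset.sum_nonneg (fun i _ => (hl i).le)
      linarith
    · have : (0:ℝ) ≤ ∑ i ∈ Finset.Icc 1 (n - 1 - 2*((n-1)/2)), l i :=
        Finset.sum_nonneg (fun i _ => (hl i).le)
      linarith
  rw [hstmt1, hstmt2]
  omega
end
end

section
/- Let n = 2r+2 be even and let l_1 ≤ ... ≤ l_n be a generic length vector (no signed sum ∑ ε_i l_i with ε_i = ±1 vanishes). Let S be the number of short subsets of {1,...,n} containing n. Then 2S ≤ 2^{n-1} - 2·binom(n-2, r). -/
open Finset

private def uwalk : ℕ → ℕ → ℕ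
  | 0, _ => 1
  | L+1, 0 => uwalk L 1
  | L+1, h+1 => uwalk L h + uwalk L (h+2)

private def Bwin (L h : ℕ) : ℕ := ∑ j ∈ range (h+1), L.choose ((L - h)/2 + j)

private lemma sum_choose_all {L t : ℕ} (ht : L + 1 ≤ t) :
    ∑ j ∈ range t, L.choose j = 2 ^ L := by
  rw [← Nat.sum_range_choose L]
  refine (Finset.sum_subset (range_subset_range.mpr ht) ?_).symm
  intro x _ hx
  simp only [mem_range, not_lt] at hx
  exact Nat.choose_eq_zero_of_lt (by omega)

private lemma Bwin_le_uwalk : ∀ L h, Bwin L h ≤ uwalk L h := by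
  intro L
  induction L with
  | zero =>
    intro h
    have e : Bwin 0 h = 1 := by
      unfold Bwin
      simp only [Nat.zero_sub, Nat.zero_div, Nat.zero_add]
      exact sum_choose_all (by omega)
    rw [e]
    exact le_refl _
  | succ L ih =>
    intro h
    match h with
    | 0 =>
      have key : Bwin (L+1) 0 ≤ Bwin L 1 := by
        unfold Bwin
        rcases Nat.eq_zero_or_pos L with rfl | hL
        · decide
        · have e1 : (L + 1 - 0)/2 = (L-1)/2 + 1 := by omega
          rw [Finset.sum_range_one, Finset.sum_range_succ, Finset.sum_range_one, e1]
          rw [add_zero, add_zero, Nat.choose_succ_succ]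
      calc Bwin (L+1) 0 ≤ Bwin L 1 := key
        _ ≤ uwalk L 1 := ih 1
        _ = uwalk (L+1) 0 := rfl
    | h'+1 =>
      have key : Bwin (L+1) (h'+1) ≤ Bwin L h' + Bwin L (h'+2) := by
        by_cases hbig : h' + 2 ≤ L
        · obtain ⟨m'', hm''⟩ : ∃ m'', (L - h')/2 = m'' + 1 := ⟨(L-h')/2 - 1, by omega⟩
          have eA : (L + 1 - (h'+1))/2 = m'' + 1 := by omega
          have eB : (L - (h'+2))/2 = m'' := by omega
          unfold Bwin
          rw [eA, eB, hm'']
          rw [show h'+2+1 = h'+3 from rfl, show h'+1+1 = h'+2 from rfl]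
          have step1 : ∑ j ∈ range (h'+2), Nat.choose (L+1) (m''+1+j)
              = (∑ j ∈ range (h'+2), Nat.choose L (m''+j))
                + ∑ j ∈ range (h'+2), Nat.choose L (m''+1+j) := by
            rw [← Finset.sum_add_distrib]
            refine Finset.sum_congr rfl (fun j _ => ?_)
            have e : m''+1+j = (m''+j)+1 := by omega
            rw [e, Nat.choose_succ_succ]
          rw [step1]
          have E1 : (∑ j ∈ range (h'+2), Nat.choose L (m''+j)) + Nat.choose L (m''+(h'+2))
              = ∑ j ∈ range (h'+3), Nat.choose L (m''+j) := (Finset.sum_range_succ _ _).symm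
          have E2 : ∑ j ∈ range (h'+2), Nat.choose L (m''+1+j)
              = (∑ j ∈ range (h'+1), Nat.choose L (m''+1+j)) + Nat.choose L (m''+1+(h'+1)) :=
            Finset.sum_range_succ _ _
          have e3 : m''+1+(h'+1) = m''+(h'+2) := by omega
          rw [E2, e3]
          omega
        · by_cases hsm : L ≤ h'
          · have eA : (L + 1 - (h'+1))/2 = 0 := by omega
            have eB : (L - h')/2 = 0 := by omega
            have eC : (L - (h'+2))/2 = 0 := by omega
            unfold Bwin
            rw [eA, eB, eC]
            simp only [Nat.zero_add]
            rw [show h'+2+1 = h'+3 from rfl, show h'+1+1 = h'+2 from rfl]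
            rw [sum_choose_all (by omega : L + 1 + 1 ≤ h'+2),
              sum_choose_all (by omega : L + 1 ≤ h'+1),
              sum_choose_all (by omega : L + 1 ≤ h'+3)]
            rw [pow_succ, mul_two]
          · have hLeq : L = h' + 1 := by omega
            subst hLeq
            have eA : (h' + 1 + 1 - (h'+1))/2 = 0 := by omega
            have eB : (h' + 1 - h')/2 = 0 := by omega
            have eC : (h' + 1 - (h'+2))/2 = 0 := by omega
            unfold Bwin
            rw [eA, eB, eC]
            simp only [Nat.zero_add]
            rw [show h'+2+1 = h'+3 from rfl, show h'+1+1 = h'+2 from rfl]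
            have f1 : (∑ j ∈ range (h'+2), Nat.choose (h'+2) j) + Nat.choose (h'+2) (h'+2)
                = 2^(h'+2) := by
              rw [← Finset.sum_range_succ]
              exact sum_choose_all (by omega)
            have f2 : (∑ j ∈ range (h'+1), Nat.choose (h'+1) j) + Nat.choose (h'+1) (h'+1)
                = 2^(h'+1) := by
              rw [← Finset.sum_range_succ]
              exact sum_choose_all (by omega)
            have f3 : ∑ j ∈ range (h'+3), Nat.choose (h'+1) j = 2^(h'+1) :=
              sum_choose_all (by omega)
            have f4 : (2:ℕ)^(h'+2) = 2^(h'+1) + 2^(h'+1) := by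
              rw [pow_succ, mul_two]
            rw [Nat.choose_self] at f1 f2
            omega
      calc Bwin (L+1) (h'+1) ≤ Bwin L h' + Bwin L (h'+2) := key
        _ ≤ uwalk L h' + uwalk L (h'+2) := Nat.add_le_add (ih h') (ih (h'+2))
        _ = uwalk (L+1) (h'+1) := rfl

private lemma choose_le_uwalk (r : ℕ) : Nat.choose (2*r) r ≤ uwalk (2*r) 0 := by
  have h := Bwin_le_uwalk (2*r) 0
  have e : Bwin (2*r) 0 = Nat.choose (2*r) r := by
    unfold Bwin
    rw [Finset.sum_range_one]
    congr 1
    omega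
  rwa [e] at h

private lemma Dsum (l : ℕ → ℝ) {k : ℕ} {A : Finset ℕ} (hA : A ⊆ Icc 1 k) :
    ((∑ i ∈ Icc 1 (k+1) \ A, l i) - ∑ i ∈ A, l i
       = ((∑ i ∈ Icc 1 k \ A, l i) - ∑ i ∈ A, l i) + l (k+1))
    ∧ ((∑ i ∈ Icc 1 (k+1) \ insert (k+1) A, l i) - ∑ i ∈ insert (k+1) A, l i
       = ((∑ i ∈ Icc 1 k \ A, l i) - ∑ i ∈ A, l i) - l (k+1)) := by
  have hnA : (k+1) ∉ A := fun h => by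
    have := hA h; rw [mem_Icc] at this; omega
  have hnI : (k+1) ∉ Icc 1 k \ A := by
    intro h
    rw [mem_sdiff, mem_Icc] at h
    omega
  have e1 : Icc 1 (k+1) \ A = insert (k+1) (Icc 1 k \ A) := by
    ext i
    simp only [mem_sdiff, mem_insert, mem_Icc]
    constructor
    · rintro ⟨h1, h2⟩
      rcases Nat.lt_or_ge i (k+1) with hi | hi
      · exact Or.inr ⟨⟨h1.1, by omega⟩, h2⟩
      · exact Or.inl (by omega)
    · rintro (rfl | ⟨h1, h2⟩)
      · exact ⟨⟨by omega, le_refl _⟩, hnA⟩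
      · exact ⟨⟨h1.1, by omega⟩, h2⟩
  have e2 : Icc 1 (k+1) \ insert (k+1) A = Icc 1 k \ A := by
    ext i
    simp only [mem_sdiff, mem_insert, mem_Icc]
    constructor
    · rintro ⟨h1, h2⟩
      push_neg at h2
      obtain ⟨h2a, h2b⟩ := h2
      exact ⟨⟨h1.1, by omega⟩, h2b⟩
    · rintro ⟨h1, h2⟩
      refine ⟨⟨h1.1, by omega⟩, ?_⟩
      rintro (rfl | hmem)
      · omega
      · exact h2 hmem
  constructor
  · rw [e1, Finset.sum_insert hnI]; ring
  · rw [e2, Finset.sum_insert hnA]; ring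

private lemma count_low (l : ℕ → ℝ) (hl : ∀ i, 0 < l i) (hmono : Monotone l) :
    ∀ k, 1 ≤ k → ∀ h : ℕ, ∀ c : ℝ, ((h : ℝ) + 1) * l k ≤ c →
      2 * uwalk (k - 1) h ≤
        (((Icc 1 k).powerset).filter
          (fun A => |(∑ i ∈ Icc 1 k \ A, l i) - ∑ i ∈ A, l i| ≤ c)).card := by
  intro k
  induction k with
  | zero => intro hk; omega
  | succ k ih =>
    intro _ h c hc
    rcases Nat.eq_zero_or_pos k with rfl | hk
    · -- base case k+1 = 1
      have h0 : (0:ℝ) ≤ (h:ℝ) := Nat.cast_nonneg h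
      have hl1c : l 1 ≤ c := by nlinarith [hl 1]
      simp only [Nat.zero_add] at hc ⊢
      have hfilter :
          (((Icc 1 1).powerset).filter
            (fun A => |(∑ i ∈ Icc 1 1 \ A, l i) - ∑ i ∈ A, l i| ≤ c))
          = (Icc 1 1).powerset := by
        apply Finset.filter_true_of_mem
        intro A hA
        rw [Finset.mem_powerset, Finset.Icc_self, Finset.subset_singleton_iff] at hA
        rcases hA with rfl | rfl
        · simp only [Finset.sdiff_empty, Finset.sum_empty, sub_zero, Finset.Icc_self,
            Finset.sum_singleton]
          rw [abs_of_pos (hl 1)]; exact hl1c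
        · simp only [Finset.Icc_self, Finset.sdiff_self, Finset.sum_empty,
            Finset.sum_singleton, zero_sub, abs_neg]
          rw [abs_of_pos (hl 1)]; exact hl1c
      rw [hfilter, Finset.card_powerset, Nat.card_Icc]
      norm_num [uwalk]
    · -- step case: k = K+1 ≥ 1
      obtain ⟨K, rfl⟩ := Nat.exists_eq_succ_of_ne_zero (Nat.pos_iff_ne_zero.mp hk)
      have h0 : (0:ℝ) ≤ (h:ℝ) := Nat.cast_nonneg h
      have hlN : (0:ℝ) < l (K+1+1) := hl _
      have hlc : l (K+1+1) ≤ c := by nlinarith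
      have hmono' : l (K+1) ≤ l (K+1+1) := hmono (by omega)
      set F1 := ((Icc 1 (K+1)).powerset).filter
          (fun A => |(∑ i ∈ Icc 1 (K+1) \ A, l i) - ∑ i ∈ A, l i| ≤ c - l (K+1+1)) with hF1
      set F2 := ((Icc 1 (K+1)).powerset).filter
          (fun A => |(∑ i ∈ Icc 1 (K+1) \ A, l i) - ∑ i ∈ A, l i| ≤ c + l (K+1+1)) with hF2
      set T := ((Icc 1 (K+1+1)).powerset).filter
          (fun A => |(∑ i ∈ Icc 1 (K+1+1) \ A, l i) - ∑ i ∈ A, l i| ≤ c) with hT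
      set g1 : Finset ℕ → Finset ℕ := fun A =>
        if (0:ℝ) ≤ (∑ i ∈ Icc 1 (K+1) \ A, l i) - ∑ i ∈ A, l i
        then A else insert (K+1+1) A with hg1
      set g2 : Finset ℕ → Finset ℕ := fun A =>
        if (0:ℝ) ≤ (∑ i ∈ Icc 1 (K+1) \ A, l i) - ∑ i ∈ A, l i
        then insert (K+1+1) A else A with hg2
      have hNnot : ∀ B : Finset ℕ, B ⊆ Icc 1 (K+1) → (K+1+1) ∉ B := by
        intro B hB hmem
        have := hB hmem; rw [mem_Icc] at this; omega
      have hsub' : ∀ B : Finset ℕ, B ⊆ Icc 1 (K+1) → B ⊆ Icc 1 (K+1+1) :=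
        fun B hB => hB.trans (Finset.Icc_subset_Icc_right (by omega))
      have hinssub : ∀ B : Finset ℕ, B ⊆ Icc 1 (K+1) → insert (K+1+1) B ⊆ Icc 1 (K+1+1) := by
        intro B hB
        exact Finset.insert_subset (by rw [mem_Icc]; omega) (hsub' B hB)
      have hg1mem : ∀ A ∈ F1, g1 A ∈ T := by
        intro A hA
        rw [hF1, Finset.mem_filter, Finset.mem_powerset] at hA
        obtain ⟨hAsub, hAabs⟩ := hA
        obtain ⟨e1, e2⟩ := Dsum l hAsub
        rw [abs_le] at hAabs
        rw [hT, Finset.mem_filter, Finset.mem_powerset]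
        simp only [hg1]
        split_ifs with hsign
        · exact ⟨hsub' A hAsub, by rw [e1, abs_le]; constructor <;> linarith⟩
        · push_neg at hsign
          exact ⟨hinssub A hAsub, by rw [e2, abs_le]; constructor <;> linarith⟩
      have hg2mem : ∀ A ∈ F2, g2 A ∈ T := by
        intro A hA
        rw [hF2, Finset.mem_filter, Finset.mem_powerset] at hA
        obtain ⟨hAsub, hAabs⟩ := hA
        obtain ⟨e1, e2⟩ := Dsum l hAsub
        rw [abs_le] at hAabs
        rw [hT, Finset.mem_filter, Finset.mem_powerset]
        simp only [hg2]
        split_ifs with hsign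
        · exact ⟨hinssub A hAsub, by rw [e2, abs_le]; constructor <;> linarith⟩
        · push_neg at hsign
          exact ⟨hsub' A hAsub, by rw [e1, abs_le]; constructor <;> linarith⟩
      have herase : ∀ X Y : Finset ℕ, (K+1+1) ∉ X → (K+1+1) ∉ Y →
          insert (K+1+1) X = insert (K+1+1) Y → X = Y := by
        intro X Y hX hY hXY
        have := congrArg (fun s => Finset.erase s (K+1+1)) hXY
        simpa [Finset.erase_insert hX, Finset.erase_insert hY] using this
      have hg1inj : Set.InjOn g1 ↑F1 := by
        intro A hA B hB heq
        rw [Finset.mem_coe, hF1, Finset.mem_filter, Finset.mem_powerset] at hA hB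
        have hNA := hNnot A hA.1
        have hNB := hNnot B hB.1
        simp only [hg1] at heq
        split_ifs at heq with h1 h2 h2
        · exact heq
        · rw [heq] at hNA; exact absurd (Finset.mem_insert_self _ _) hNA
        · rw [← heq] at hNB; exact absurd (Finset.mem_insert_self _ _) hNB
        · exact herase A B hNA hNB heq
      have hg2inj : Set.InjOn g2 ↑F2 := by
        intro A hA B hB heq
        rw [Finset.mem_coe, hF2, Finset.mem_filter, Finset.mem_powerset] at hA hB
        have hNA := hNnot A hA.1
        have hNB := hNnot B hB.1
        simp only [hg2] at heq
        split_ifs at heq with h1 h2 h2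
        · exact herase A B hNA hNB heq
        · rw [← heq] at hNB; exact absurd (Finset.mem_insert_self _ _) hNB
        · rw [heq] at hNA; exact absurd (Finset.mem_insert_self _ _) hNA
        · exact heq
      have hdisj : Disjoint (F1.image g1) (F2.image g2) := by
        rw [Finset.disjoint_left]
        rintro X hX1 hX2
        rw [Finset.mem_image] at hX1 hX2
        obtain ⟨A, hA, hgA⟩ := hX1
        obtain ⟨B, hB, hgB⟩ := hX2
        rw [hF1, Finset.mem_filter, Finset.mem_powerset] at hA
        rw [hF2, Finset.mem_filter, Finset.mem_powerset] at hB
        have hNA := hNnot A hA.1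
        have hNB := hNnot B hB.1
        simp only [hg1] at hgA
        simp only [hg2] at hgB
        split_ifs at hgA with h1 <;> split_ifs at hgB with h2
        · -- X = A and X = insert _ B : (K+1+1) ∈ X contradiction
          rw [hgA] at hNA
          rw [← hgB] at hNA
          exact hNA (Finset.mem_insert_self _ _)
        · -- X = A and X = B : signs contradict
          have hAB : A = B := by rw [hgA, hgB]
          rw [hAB] at h1
          exact h2 h1
        · -- X = insert A and X = insert B
          have hAB : A = B := herase A B hNA hNB (by rw [hgA, hgB])
          rw [hAB] at h1
          exact h1 h2
        · -- X = insert A and X = B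
          rw [hgB] at hNB
          rw [← hgA] at hNB
          exact hNB (Finset.mem_insert_self _ _)
      have hcard12 : F1.card + F2.card ≤ T.card := by
        rw [← Finset.card_image_of_injOn hg1inj, ← Finset.card_image_of_injOn hg2inj,
          ← Finset.card_union_of_disjoint hdisj]
        apply Finset.card_le_card
        apply Finset.union_subset
        · intro X hX
          rw [Finset.mem_image] at hX
          obtain ⟨A, hA, rfl⟩ := hX
          exact hg1mem A hA
        · intro X hX
          rw [Finset.mem_image] at hX
          obtain ⟨A, hA, rfl⟩ := hX
          exact hg2mem A hA
      have hcF2 : F2.card ≤ T.card := le_trans (Nat.le_add_left _ _) hcard12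
      cases h with
      | zero =>
        have ih2 := ih (by omega) 1 (c + l (K+1+1)) (by push_cast; nlinarith)
        rw [← hF2] at ih2
        have e0 : uwalk (K+1+1-1) 0 = uwalk K 1 := by simp [uwalk]
        rw [e0]
        exact le_trans ih2 hcF2
      | succ h' =>
        push_cast at hc
        have hM1 : ((h':ℝ)+1) * l (K+1) ≤ ((h':ℝ)+1) * l (K+1+1) :=
          mul_le_mul_of_nonneg_left hmono' (by positivity)
        have hM2 : ((h':ℝ)+3) * l (K+1) ≤ ((h':ℝ)+3) * l (K+1+1) :=
          mul_le_mul_of_nonneg_left hmono' (by positivity)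
        have ih1 := ih (by omega) h' (c - l (K+1+1)) (by push_cast; nlinarith)
        have ih2 := ih (by omega) (h'+2) (c + l (K+1+1)) (by push_cast; nlinarith)
        rw [← hF1] at ih1
        rw [← hF2] at ih2
        have e1' : uwalk (K+1+1-1) (h'+1) = uwalk K h' + uwalk K (h'+2) := by
          simp [uwalk]
        rw [e1', Nat.mul_add]
        exact le_trans (Nat.add_le_add ih1 ih2) hcard12

/-- Upper bound on the total Betti number in the generic even case: for
`n = 2r+2` and a generic sorted positive length vector, twice the number of
short subsets containing `n` is at most `2^{n-1} - 2·binom (n-2) r`. -/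
theorem total_betti_upper_bound_generic_even (r : ℕ) (hr : 1 ≤ r) (n : ℕ)
    (hn : n = 2 * r + 2) (l : ℕ → ℝ) (hl : ∀ i, 0 < l i) (hmono : Monotone l)
    (hgen : ∀ ε : ℕ → ℝ, (∀ i ∈ Finset.Icc 1 n, ε i = 1 ∨ ε i = -1) →
      ∑ i ∈ Finset.Icc 1 n, ε i * l i ≠ 0) :
    2 * ((Finset.Icc 1 n).powerset.filter (fun J => n ∈ J ∧
        (∑ i ∈ J, l i < ∑ i ∈ Finset.Icc 1 n \ J, l i))).card ≤
    2 ^ (n - 1) - 2 * (n - 2).choose r := by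
  subst hn
  have hIccsplit : Icc 1 (2*r+2) = insert (2*r+2) (Icc 1 (2*r+1)) := by
    ext i; simp only [Finset.mem_Icc, Finset.mem_insert]; omega
  have hnotmem : (2*r+2) ∉ Icc 1 (2*r+1) := by
    rw [mem_Icc]; omega
  -- genericity consequence
  have hgenD : ∀ A : Finset ℕ, A ⊆ Icc 1 (2*r+1) →
      ((∑ i ∈ Icc 1 (2*r+1) \ A, l i) - ∑ i ∈ A, l i ≠ l (2*r+2) ∧
       (∑ i ∈ Icc 1 (2*r+1) \ A, l i) - ∑ i ∈ A, l i ≠ -l (2*r+2)) := by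
    intro A hA
    have key : ∀ s : ℝ, s = 1 ∨ s = -1 →
        s * l (2*r+2) + ((∑ i ∈ Icc 1 (2*r+1) \ A, l i) - ∑ i ∈ A, l i) ≠ 0 := by
      intro s hs h0
      have e1 : ∑ i ∈ Icc 1 (2*r+1) \ A,
          (if i = 2*r+2 then s else if i ∈ A then (-1:ℝ) else 1) * l i
          = ∑ i ∈ Icc 1 (2*r+1) \ A, l i := by
        apply Finset.sum_congr rfl
        intro i hi
        rw [Finset.mem_sdiff, Finset.mem_Icc] at hi
        rw [if_neg (by omega), if_neg hi.2, one_mul]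
      have e2 : ∑ i ∈ A, (if i = 2*r+2 then s else if i ∈ A then (-1:ℝ) else 1) * l i
          = -∑ i ∈ A, l i := by
        rw [← Finset.sum_neg_distrib]
        apply Finset.sum_congr rfl
        intro i hi
        have hiK : i ∈ Icc 1 (2*r+1) := hA hi
        rw [Finset.mem_Icc] at hiK
        rw [if_neg (by omega), if_pos hi, neg_one_mul]
      have etop : (if (2*r+2 : ℕ) = 2*r+2 then s else if (2*r+2) ∈ A then (-1:ℝ) else 1) = s :=
        if_pos rfl
      refine hgen (fun i => if i = 2*r+2 then s else if i ∈ A then (-1:ℝ) else 1) ?_ ?_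
      · intro i _
        by_cases h1 : i = 2*r+2
        · simpa [h1] using hs
        · by_cases h2 : i ∈ A <;> simp [h1, h2]
      · show ∑ i ∈ Icc 1 (2*r+2),
            (if i = 2*r+2 then s else if i ∈ A then (-1:ℝ) else 1) * l i = 0
        rw [hIccsplit, Finset.sum_insert hnotmem, etop, ← Finset.sum_sdiff hA, e1, e2]
        linarith
    constructor
    · intro hEq
      exact key (-1) (Or.inr rfl) (by rw [hEq]; ring)
    · intro hEq
      exact key 1 (Or.inl rfl) (by rw [hEq]; ring)
  set P := (Icc 1 (2*r+1)).powerset with hP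
  set Splus := P.filter (fun A => l (2*r+2) <
      (∑ i ∈ Icc 1 (2*r+1) \ A, l i) - ∑ i ∈ A, l i) with hSp
  set Sminus := P.filter (fun A =>
      (∑ i ∈ Icc 1 (2*r+1) \ A, l i) - ∑ i ∈ A, l i < -l (2*r+2)) with hSm
  set Mid := P.filter (fun A =>
      |(∑ i ∈ Icc 1 (2*r+1) \ A, l i) - ∑ i ∈ A, l i| < l (2*r+2)) with hMd
  -- the original count equals Splus.card
  have horig : ((Finset.Icc 1 (2*r+2)).powerset.filter (fun J => 2*r+2 ∈ J ∧
        (∑ i ∈ J, l i < ∑ i ∈ Finset.Icc 1 (2*r+2) \ J, l i))).card = Splus.card := by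
    apply Finset.card_bij' (fun J _ => J.erase (2*r+2)) (fun A _ => insert (2*r+2) A)
    · intro J hJ
      rw [Finset.mem_filter] at hJ
      exact Finset.insert_erase hJ.2.1
    · intro A hA
      rw [hSp, Finset.mem_filter, Finset.mem_powerset] at hA
      exact Finset.erase_insert (fun hmem => hnotmem (hA.1 hmem))
    · intro J hJ
      rw [Finset.mem_filter, Finset.mem_powerset] at hJ
      obtain ⟨hJsub, hJmem, hJlt⟩ := hJ
      have hAsub : J.erase (2*r+2) ⊆ Icc 1 (2*r+1) := by
        intro i hi
        rw [Finset.mem_erase] at hi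
        have := hJsub hi.2
        rw [Finset.mem_Icc] at this ⊢
        have hne := hi.1
        omega
      obtain ⟨-, e2⟩ := Dsum l hAsub
      rw [hSp, Finset.mem_filter, Finset.mem_powerset]
      refine ⟨hAsub, ?_⟩
      rw [show (2*r+1)+1 = 2*r+2 from rfl] at e2
      rw [Finset.insert_erase hJmem] at e2
      linarith
    · intro A hA
      rw [hSp, Finset.mem_filter, Finset.mem_powerset] at hA
      obtain ⟨hAsub, hAlt⟩ := hA
      obtain ⟨-, e2⟩ := Dsum l hAsub
      rw [show (2*r+1)+1 = 2*r+2 from rfl] at e2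
      rw [Finset.mem_filter, Finset.mem_powerset]
      refine ⟨?_, Finset.mem_insert_self _ _, by linarith⟩
      exact Finset.insert_subset (by rw [mem_Icc]; omega)
        (hAsub.trans (Finset.Icc_subset_Icc_right (by omega)))
  -- Splus and Sminus have equal cardinality
  have hSS : Splus.card = Sminus.card := by
    apply Finset.card_bij' (fun A _ => Icc 1 (2*r+1) \ A) (fun A _ => Icc 1 (2*r+1) \ A)
    · intro A hA
      rw [hSp, Finset.mem_filter, Finset.mem_powerset] at hA
      obtain ⟨hAsub, hAlt⟩ := hA
      rw [hSm, Finset.mem_filter, Finset.mem_powerset]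
      refine ⟨Finset.sdiff_subset, ?_⟩
      rw [Finset.sdiff_sdiff_eq_self hAsub]
      linarith
    · intro A hA
      rw [hSm, Finset.mem_filter, Finset.mem_powerset] at hA
      obtain ⟨hAsub, hAlt⟩ := hA
      rw [hSp, Finset.mem_filter, Finset.mem_powerset]
      refine ⟨Finset.sdiff_subset, ?_⟩
      rw [Finset.sdiff_sdiff_eq_self hAsub]
      linarith
    · intro A hA
      rw [hSp, Finset.mem_filter, Finset.mem_powerset] at hA
      exact Finset.sdiff_sdiff_eq_self hA.1
    · intro A hA
      rw [hSm, Finset.mem_filter, Finset.mem_powerset] at hA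
      exact Finset.sdiff_sdiff_eq_self hA.1
  -- partition
  have hdisj1 : Disjoint Splus Sminus := by
    rw [Finset.disjoint_left]
    intro A h1 h2
    rw [hSp, Finset.mem_filter] at h1
    rw [hSm, Finset.mem_filter] at h2
    have := hl (2*r+2)
    linarith [h1.2, h2.2]
  have hdisj2 : Disjoint (Splus ∪ Sminus) Mid := by
    rw [Finset.disjoint_left]
    intro A h1 h2
    rw [hMd, Finset.mem_filter, abs_lt] at h2
    rw [Finset.mem_union, hSp, hSm, Finset.mem_filter, Finset.mem_filter] at h1
    rcases h1 with h1 | h1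
    · linarith [h1.2, h2.2.2]
    · linarith [h1.2, h2.2.1]
  have hunion : Splus ∪ Sminus ∪ Mid = P := by
    ext A
    simp only [Finset.mem_union, hSp, hSm, hMd, Finset.mem_filter]
    constructor
    · rintro ((h|h)|h) <;> exact h.1
    · intro hA
      have hAsub : A ⊆ Icc 1 (2*r+1) := by
        rw [hP, Finset.mem_powerset] at hA
        exact hA
      obtain ⟨hne1, hne2⟩ := hgenD A hAsub
      rcases hne1.lt_or_gt with h1 | h1
      · rcases hne2.lt_or_gt with h2 | h2
        · exact Or.inl (Or.inr ⟨hA, h2⟩)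
        · exact Or.inr ⟨hA, abs_lt.mpr ⟨h2, h1⟩⟩
      · exact Or.inl (Or.inl ⟨hA, h1⟩)
  have hcards : Splus.card + Sminus.card + Mid.card = 2^(2*r+1) := by
    rw [← Finset.card_union_of_disjoint hdisj1, ← Finset.card_union_of_disjoint hdisj2,
      hunion, hP, Finset.card_powerset, Nat.card_Icc]
    norm_num
  -- lower bound for Mid
  have hmidlow : 2 * Nat.choose (2*r) r ≤ Mid.card := by
    have h1 := count_low l hl hmono (2*r+1) (by omega) 0 (l (2*r+1)) (by norm_num)
    have h2 : ((Icc 1 (2*r+1)).powerset.filter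
        (fun A => |(∑ i ∈ Icc 1 (2*r+1) \ A, l i) - ∑ i ∈ A, l i| ≤ l (2*r+1))).card
        ≤ Mid.card := by
      apply Finset.card_le_card
      intro A hA
      rw [Finset.mem_filter] at hA
      rw [hMd, Finset.mem_filter]
      refine ⟨hA.1, ?_⟩
      obtain ⟨hne1, hne2⟩ := hgenD A (Finset.mem_powerset.mp hA.1)
      have hmono2 : l (2*r+1) ≤ l (2*r+2) := hmono (by omega)
      have hne : |(∑ i ∈ Icc 1 (2*r+1) \ A, l i) - ∑ i ∈ A, l i| ≠ l (2*r+2) := by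
        intro hEq
        rcases (abs_eq (le_of_lt (hl (2*r+2)))).mp hEq with hx | hx
        · exact hne1 hx
        · exact hne2 hx
      exact lt_of_le_of_ne (le_trans hA.2 hmono2) hne
    have h3 : Nat.choose (2*r) r ≤ uwalk (2*r) 0 := choose_le_uwalk r
    have e : (2*r+1) - 1 = 2*r := rfl
    rw [e] at h1
    calc 2 * Nat.choose (2*r) r ≤ 2 * uwalk (2*r) 0 := by omega
      _ ≤ _ := le_trans h1 h2
  -- conclude
  rw [horig]
  have e1 : 2*r+2-1 = 2*r+1 := by omega
  have e2 : 2*r+2-2 = 2*r := by omega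
  rw [e1, e2]
  omega
end

section
/- Let l_1 ≤ ... ≤ l_n be positive reals, 1 ≤ i ≤ ⌊(n-1)/2⌋ + 1, and set r = ⌊(n-1)/2⌋. Let S_i be the number of short subsets of {1,...,n} containing {n-i+1,...,n}, and M_i the number of median subsets containing {n-i+1,...,n}. Then 2·S_i + M_i ≤ 2^{n-i} - ∑_{j=r-i+1}^{r} binom(n-i, j). -/
open Finset

/-! Auxiliary development for `short_median_intermediate_bound`. -/

noncomputable def wgt (x y : ℝ) : ℕ := if x < y then 2 else if x = y then 1 else 0

lemma wgt_congr {x y x' y' : ℝ} (h1 : x < y ↔ x' < y') (h2 : x = y ↔ x' = y') :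
    wgt x y = wgt x' y' := by
  unfold wgt
  split_ifs <;> tauto

lemma wgt_pair {S a b t : ℝ} (hab : a + b = S) (ht : 0 ≤ t) :
    wgt (2 * a) (S - t) + wgt (2 * b) (S - t) ≤ 2 := by
  unfold wgt
  split_ifs <;> first | omega | (exfalso; linarith)

def Efun (m c : ℕ) : ℕ :=
  ∑ k ∈ range (m + 1), m.choose k * (if 2 * k + c ≤ m then 1 else 0)

def Dfun (m i : ℕ) : ℕ := Efun m (i + 1) + Efun m i

lemma Efun_reflect (m c : ℕ) :
    Efun m c = ∑ k ∈ range (m + 1), m.choose k * (if m + c ≤ 2 * k then 1 else 0) := by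
  unfold Efun
  rw [← Finset.sum_range_reflect]
  refine Finset.sum_congr rfl fun k hk => ?_
  have hk' : k ≤ m := by simpa [Nat.lt_succ_iff] using hk
  have h1 : m + 1 - 1 - k = m - k := by omega
  rw [h1, Nat.choose_symm hk']
  congr 1
  exact if_congr (by omega) rfl rfl

lemma Dfun_zero (m : ℕ) : Dfun m 0 = 2 ^ m := by
  unfold Dfun
  rw [Efun_reflect m 0]
  unfold Efun
  rw [← Finset.sum_add_distrib]
  have h : ∀ k ∈ range (m + 1),
      m.choose k * (if 2 * k + (0 + 1) ≤ m then 1 else 0)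
        + m.choose k * (if m + 0 ≤ 2 * k then 1 else 0) = m.choose k := by
    intro k hk
    rw [← Nat.mul_add]
    have : (if 2 * k + (0 + 1) ≤ m then 1 else 0) + (if m + 0 ≤ 2 * k then 1 else 0) = 1 := by
      split_ifs <;> omega
    rw [this, Nat.mul_one]
  rw [Finset.sum_congr rfl h]
  exact Nat.sum_range_choose m

lemma Efun_rec (m c : ℕ) : Efun (m + 1) (c + 1) = Efun m (c + 2) + Efun m c := by
  have hEc : Efun m c
      = (∑ k ∈ range m, m.choose (k + 1) * (if 2 * (k + 1) + c ≤ m then 1 else 0))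
        + (if c ≤ m then 1 else 0) := by
    unfold Efun
    rw [Finset.sum_range_succ']
    simp
  have hstep : Efun (m + 1) (c + 1)
      = (∑ k ∈ range (m + 1), (m + 1).choose (k + 1)
          * (if 2 * (k + 1) + (c + 1) ≤ m + 1 then 1 else 0))
        + (if c ≤ m then 1 else 0) := by
    unfold Efun
    rw [Finset.sum_range_succ']
    congr 1
    simp only [Nat.choose_zero_right, Nat.one_mul, Nat.mul_zero, Nat.zero_add]
    exact if_congr (by omega) rfl rfl
  have hsplit : ∀ k, (m + 1).choose (k + 1) * (if 2 * (k + 1) + (c + 1) ≤ m + 1 then 1 else 0)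
      = m.choose k * (if 2 * k + (c + 2) ≤ m then 1 else 0)
        + m.choose (k + 1) * (if 2 * (k + 1) + c ≤ m then 1 else 0) := by
    intro k
    rw [Nat.choose_succ_succ, Nat.add_mul]
    congr 1
    · congr 1; exact if_congr (by omega) rfl rfl
    · congr 1; exact if_congr (by omega) rfl rfl
  rw [hstep, Finset.sum_congr rfl (fun k _ => hsplit k), Finset.sum_add_distrib]
  have hlast : ∑ k ∈ range (m + 1), m.choose (k + 1) * (if 2 * (k + 1) + c ≤ m then 1 else 0)
      = ∑ k ∈ range m, m.choose (k + 1) * (if 2 * (k + 1) + c ≤ m then 1 else 0) := by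
    rw [Finset.sum_range_succ]
    have : m.choose (m + 1) = 0 := Nat.choose_eq_zero_of_lt (by omega)
    simp [this]
  rw [hlast, hEc]
  unfold Efun
  omega

lemma Dfun_rec (m j : ℕ) : Dfun (m + 1) (j + 1) = Dfun m (j + 2) + Dfun m j := by
  unfold Dfun
  have e1 := Efun_rec m (j + 1)
  have e2 := Efun_rec m j
  have e3 : j + 1 + 2 = j + 2 + 1 := by omega
  rw [e3] at e1
  omega

noncomputable def Wfun (l : ℕ → ℝ) (m : ℕ) (t : ℝ) : ℕ :=
  ∑ A ∈ (Icc 1 m).powerset, wgt (2 * ∑ j ∈ A, l j) ((∑ j ∈ Icc 1 m, l j) - t)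

lemma Wfun_le_pow (l : ℕ → ℝ) (m : ℕ) (t : ℝ) (ht : 0 ≤ t) : Wfun l m t ≤ 2 ^ m := by
  have hdup : Wfun l m t = ∑ A ∈ (Icc 1 m).powerset,
      wgt (2 * ∑ j ∈ Icc 1 m \ A, l j) ((∑ j ∈ Icc 1 m, l j) - t) := by
    refine Finset.sum_bij' (fun A _ => Icc 1 m \ A) (fun A _ => Icc 1 m \ A)
      (fun A hA => mem_powerset.mpr (sdiff_subset))
      (fun A hA => mem_powerset.mpr (sdiff_subset))
      (fun A hA => Finset.sdiff_sdiff_eq_self (mem_powerset.mp hA))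
      (fun A hA => Finset.sdiff_sdiff_eq_self (mem_powerset.mp hA))
      (fun A hA => ?_)
    rw [Finset.sdiff_sdiff_eq_self (mem_powerset.mp hA)]
  have h2 : 2 * Wfun l m t ≤ 2 * 2 ^ m := by
    have hWr : Wfun l m t = ∑ A ∈ (Icc 1 m).powerset,
        wgt (2 * ∑ j ∈ A, l j) ((∑ j ∈ Icc 1 m, l j) - t) := rfl
    have heq : 2 * Wfun l m t = ∑ A ∈ (Icc 1 m).powerset,
        (wgt (2 * ∑ j ∈ A, l j) ((∑ j ∈ Icc 1 m, l j) - t)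
          + wgt (2 * ∑ j ∈ Icc 1 m \ A, l j) ((∑ j ∈ Icc 1 m, l j) - t)) := by
      rw [Finset.sum_add_distrib, Nat.two_mul]
      nth_rewrite 2 [hdup]
      rw [hWr]
    rw [heq]
    calc ∑ A ∈ (Icc 1 m).powerset,
        (wgt (2 * ∑ j ∈ A, l j) ((∑ j ∈ Icc 1 m, l j) - t)
          + wgt (2 * ∑ j ∈ Icc 1 m \ A, l j) ((∑ j ∈ Icc 1 m, l j) - t))
        ≤ ∑ _A ∈ (Icc 1 m).powerset, 2 := by
          refine Finset.sum_le_sum fun A hA => ?_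
          have hsub : A ⊆ Icc 1 m := mem_powerset.mp hA
          have hsd : (∑ j ∈ A, l j) + (∑ j ∈ Icc 1 m \ A, l j) = ∑ j ∈ Icc 1 m, l j := by
            rw [add_comm]; exact Finset.sum_sdiff hsub
          exact wgt_pair hsd ht
      _ = 2 * 2 ^ m := by
          rw [Finset.sum_const, Finset.card_powerset, Nat.card_Icc]
          simp [Nat.mul_comm]
  omega

lemma Wfun_succ (l : ℕ → ℝ) (m : ℕ) (t : ℝ) :
    Wfun l (m + 1) t = Wfun l m (t - l (m + 1)) + Wfun l m (t + l (m + 1)) := by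
  unfold Wfun
  have hni : (m + 1) ∉ Icc 1 m := by simp
  have hIcc : Icc 1 (m + 1) = insert (m + 1) (Icc 1 m) := by
    ext x; simp [mem_Icc]; omega
  rw [hIcc, Finset.sum_powerset_insert hni, Finset.sum_insert hni]
  congr 1
  · refine Finset.sum_congr rfl fun A hA => ?_
    exact wgt_congr (by constructor <;> intro <;> linarith) (by constructor <;> intro <;> linarith)
  · refine Finset.sum_congr rfl fun A hA => ?_
    have hA' : (m + 1) ∉ A := fun h => hni (mem_powerset.mp hA h)
    rw [Finset.sum_insert hA']
    exact wgt_congr (by constructor <;> intro <;> linarith) (by constructor <;> intro <;> linarith)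

lemma gen_bound (l : ℕ → ℝ) (hl : ∀ j, 0 < l j) (hmono : Monotone l) :
    ∀ m i : ℕ, ∀ t : ℝ, (i : ℝ) * l (m + 1) ≤ t → Wfun l m t ≤ Dfun m i := by
  intro m
  induction m with
  | zero =>
    intro i t ht
    match i with
    | 0 =>
      have h0 : (0 : ℝ) ≤ t := by simpa using ht
      calc Wfun l 0 t ≤ 2 ^ 0 := Wfun_le_pow l 0 t h0
        _ = Dfun 0 0 := (Dfun_zero 0).symm
    | j + 1 =>
      have htpos : 0 < t := by
        have h1 : (0 : ℝ) < ((j : ℝ) + 1) * l 1 := by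
          have hj : (0 : ℝ) ≤ (j : ℝ) := Nat.cast_nonneg j
          nlinarith [hl 1]
        push_cast at ht
        linarith
      have : Wfun l 0 t = 0 := by
        unfold Wfun wgt
        have h0 : Icc 1 0 = (∅ : Finset ℕ) := by simp
        rw [h0]
        rw [Finset.powerset_empty, Finset.sum_singleton, Finset.sum_empty]
        split_ifs <;> first | rfl | (exfalso; linarith)
      omega
  | succ m ih =>
    intro i t ht
    match i with
    | 0 =>
      have h0 : (0 : ℝ) ≤ t := by simpa using ht
      calc Wfun l (m + 1) t ≤ 2 ^ (m + 1) := Wfun_le_pow l (m + 1) t h0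
        _ = Dfun (m + 1) 0 := (Dfun_zero (m + 1)).symm
    | j + 1 =>
      have hmle : l (m + 1) ≤ l (m + 2) := hmono (by omega)
      have hlp : 0 < l (m + 1) := hl (m + 1)
      have hcast : ((j : ℝ) + 1) * l (m + 2) ≤ t := by push_cast at ht; linarith
      have hmul : ((j : ℝ) + 1) * l (m + 1) ≤ ((j : ℝ) + 1) * l (m + 2) := by
        have : (0 : ℝ) ≤ (j : ℝ) + 1 := by positivity
        nlinarith
      have h1 : (j : ℝ) * l (m + 1) ≤ t - l (m + 1) := by nlinarith
      have h2 : ((j + 2 : ℕ) : ℝ) * l (m + 1) ≤ t + l (m + 1) := by push_cast; nlinarith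
      have b1 := ih j (t - l (m + 1)) h1
      have b2 := ih (j + 2) (t + l (m + 1)) h2
      rw [Wfun_succ, Dfun_rec]
      omega

lemma Dfun_compl (n r i : ℕ) (hn : 1 ≤ n) (hr : r = (n - 1) / 2) (hi1 : 1 ≤ i)
    (hi2 : i ≤ r + 1) :
    Dfun (n - i) i + ∑ j ∈ Icc (r + 1 - i) r, (n - i).choose j = 2 ^ (n - i) := by
  have hin : i ≤ n := by omega
  set m := n - i with hm
  have hrm : r ≤ m := by omega
  have hIcc : ∑ j ∈ Icc (r + 1 - i) r, m.choose j
      = ∑ k ∈ range (m + 1), m.choose k * (if r + 1 - i ≤ k ∧ k ≤ r then 1 else 0) := by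
    simp only [mul_ite, mul_one, mul_zero]
    rw [← Finset.sum_filter]
    apply Finset.sum_congr _ (fun _ _ => rfl)
    ext k
    simp only [mem_filter, mem_range, mem_Icc]
    omega
  rw [hIcc]
  unfold Dfun
  rw [Efun_reflect m i]
  unfold Efun
  rw [← Finset.sum_add_distrib, ← Finset.sum_add_distrib]
  have h : ∀ k ∈ range (m + 1),
      (m.choose k * (if 2 * k + (i + 1) ≤ m then 1 else 0)
        + m.choose k * (if m + i ≤ 2 * k then 1 else 0))
        + m.choose k * (if r + 1 - i ≤ k ∧ k ≤ r then 1 else 0) = m.choose k := by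
    intro k hk
    have hk' : k ≤ m := by simpa [Nat.lt_succ_iff] using hk
    rw [← Nat.mul_add, ← Nat.mul_add]
    have : ((if 2 * k + (i + 1) ≤ m then 1 else 0) + (if m + i ≤ 2 * k then 1 else 0))
        + (if r + 1 - i ≤ k ∧ k ≤ r then 1 else 0) = 1 := by
      split_ifs <;> omega
    rw [this, Nat.mul_one]
  rw [Finset.sum_congr rfl h]
  exact Nat.sum_range_choose m

/-- Inductive inequality: for a sorted positive length vector, with
`r = ⌊(n-1)/2⌋` and `1 ≤ i ≤ r+1`, twice the number of short subsets
containing the top `i` indices plus the number of median subsets containing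
them is at most `2^{n-i} - ∑_{j=r-i+1}^{r} binom (n-i) j`. -/
theorem short_median_intermediate_bound (n : ℕ) (hn : 1 ≤ n) (l : ℕ → ℝ)
    (hl : ∀ i, 0 < l i) (hmono : Monotone l)
    (r : ℕ) (hr : r = (n - 1) / 2) (i : ℕ) (hi1 : 1 ≤ i) (hi2 : i ≤ r + 1) :
    2 * ((Finset.Icc 1 n).powerset.filter (fun J =>
        Finset.Icc (n - i + 1) n ⊆ J ∧
        (∑ j ∈ J, l j < ∑ j ∈ Finset.Icc 1 n \ J, l j))).card +
      ((Finset.Icc 1 n).powerset.filter (fun J =>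
        Finset.Icc (n - i + 1) n ⊆ J ∧
        (∑ j ∈ J, l j = ∑ j ∈ Finset.Icc 1 n \ J, l j))).card ≤
    2 ^ (n - i) - ∑ j ∈ Finset.Icc (r + 1 - i) r, (n - i).choose j := by
  classical
  have hin : i ≤ n := by omega
  set m := n - i with hm
  set t := ∑ j ∈ Icc (m + 1) n, l j with htdef
  have hcardT : (Icc (m + 1) n).card = i := by rw [Nat.card_Icc]; omega
  have ht : (i : ℝ) * l (m + 1) ≤ t := by
    have hb : (Icc (m + 1) n).card • l (m + 1) ≤ ∑ j ∈ Icc (m + 1) n, l j := by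
      refine Finset.card_nsmul_le_sum _ _ _ fun x hx => ?_
      exact hmono (mem_Icc.mp hx).1
    rw [hcardT] at hb
    simpa [nsmul_eq_mul] using hb
  have hSig : ∑ j ∈ Icc 1 n, l j = (∑ j ∈ Icc 1 m, l j) + t := by
    rw [htdef]
    rw [show Icc 1 n = Ioc 0 n from Finset.Icc_add_one_left_eq_Ioc 0 n,
      show Icc 1 m = Ioc 0 m from Finset.Icc_add_one_left_eq_Ioc 0 m,
      show Icc (m + 1) n = Ioc m n from Finset.Icc_add_one_left_eq_Ioc m n]
    exact (Finset.sum_Ioc_consecutive _ (Nat.zero_le m) (by omega)).symm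
  have hkey : 2 * ((Icc 1 n).powerset.filter (fun J =>
        Icc (m + 1) n ⊆ J ∧
        (∑ j ∈ J, l j < ∑ j ∈ Icc 1 n \ J, l j))).card +
      ((Icc 1 n).powerset.filter (fun J =>
        Icc (m + 1) n ⊆ J ∧
        (∑ j ∈ J, l j = ∑ j ∈ Icc 1 n \ J, l j))).card = Wfun l m t := by
    rw [Finset.card_filter, Finset.card_filter, Finset.mul_sum, ← Finset.sum_add_distrib]
    have step1 : ∀ J ∈ (Icc 1 n).powerset,
        (2 * (if Icc (m + 1) n ⊆ J ∧ (∑ j ∈ J, l j < ∑ j ∈ Icc 1 n \ J, l j) then 1 else 0)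
          + (if Icc (m + 1) n ⊆ J ∧ (∑ j ∈ J, l j = ∑ j ∈ Icc 1 n \ J, l j) then 1 else 0))
        = (if Icc (m + 1) n ⊆ J then
            wgt (2 * ∑ j ∈ J \ Icc (m + 1) n, l j) ((∑ j ∈ Icc 1 m, l j) - t) else 0) := by
      intro J hJ
      by_cases hTJ : Icc (m + 1) n ⊆ J
      · have hJs : J ⊆ Icc 1 n := mem_powerset.mp hJ
        have e1 : (∑ j ∈ J \ Icc (m + 1) n, l j) + t = ∑ j ∈ J, l j := by
          rw [htdef]; exact Finset.sum_sdiff hTJ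
        have e2 : (∑ j ∈ Icc 1 n \ J, l j) + (∑ j ∈ J, l j) = ∑ j ∈ Icc 1 n, l j :=
          Finset.sum_sdiff hJs
        have hlt : (∑ j ∈ J, l j < ∑ j ∈ Icc 1 n \ J, l j)
            ↔ 2 * ∑ j ∈ J \ Icc (m + 1) n, l j < (∑ j ∈ Icc 1 m, l j) - t := by
          constructor <;> intro <;> linarith
        have heq2 : (∑ j ∈ J, l j = ∑ j ∈ Icc 1 n \ J, l j)
            ↔ 2 * ∑ j ∈ J \ Icc (m + 1) n, l j = (∑ j ∈ Icc 1 m, l j) - t := by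
          constructor <;> intro <;> linarith
        simp only [hTJ, true_and, if_true, hlt, heq2]
        unfold wgt
        split_ifs <;> first | rfl | omega | (exfalso; linarith)
      · simp [hTJ]
    rw [Finset.sum_congr rfl step1, ← Finset.sum_filter]
    unfold Wfun
    refine Finset.sum_bij' (fun J _ => J \ Icc (m + 1) n)
      (fun A _ => A ∪ Icc (m + 1) n) ?_ ?_ ?_ ?_ ?_
    · intro J hJ
      rw [mem_filter] at hJ
      refine mem_powerset.mpr fun x hx => ?_
      rw [mem_sdiff] at hx
      have hx1 := mem_Icc.mp (mem_powerset.mp hJ.1 hx.1)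
      have hx2 : ¬(m + 1 ≤ x ∧ x ≤ n) := fun h => hx.2 (mem_Icc.mpr h)
      exact mem_Icc.mpr (by omega)
    · intro A hA
      rw [mem_filter]
      constructor
      · refine mem_powerset.mpr (Finset.union_subset (fun x hx => ?_) (fun x hx => ?_))
        · have := mem_Icc.mp (mem_powerset.mp hA hx)
          exact mem_Icc.mpr (by omega)
        · have := mem_Icc.mp hx
          exact mem_Icc.mpr (by omega)
      · exact Finset.subset_union_right
    · intro J hJ
      rw [mem_filter] at hJ
      exact Finset.sdiff_union_of_subset hJ.2
    · intro A hA
      ext x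
      simp only [Finset.mem_sdiff, Finset.mem_union]
      constructor
      · rintro ⟨h | h, hnot⟩
        · exact h
        · exact absurd h hnot
      · intro hx
        refine ⟨Or.inl hx, fun hc => ?_⟩
        have h1 := mem_Icc.mp (mem_powerset.mp hA hx)
        have h2 := mem_Icc.mp hc
        omega
    · intro J hJ
      rfl
  rw [hkey]
  have h1 := gen_bound l hl hmono m i t ht
  have h2 := Dfun_compl n r i hn hr hi1 hi2
  rw [← hm] at h2
  omega
end
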